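/- arXiv:0902.2003 — 4 statements merged into one kernel-verified Lean document; each statement's English description precedes it below -/
import Mathlib

section
/- There exists a constant C > 0 such that for every s ∈ ℂ one has |1/Γ(s)| ≤ C · (1 + |s|)^(1/2 − Re s) · exp(arg(s)·Im(s) + Re(s)), where Γ is the complex Gamma function, 1/Γ denotes its entire reciprocal (with value 0 at the poles of Γ), arg(s) is the principal argument taken in (−π, π], and the power (1+|s|)^(1/2 − Re s) is the real power of the positive real number 1+|s|. -/
open Complex Filter Set Finset intervalIntegral
open scoped Real Topology Nat

noncomputable section

namespace GammaEst
-- === from p1.lean ===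

/-- `gg σ t x = log |(σ+x) + i t|`. -/
def gg (σ t x : ℝ) : ℝ := Real.log ((σ + x) ^ 2 + t ^ 2) / 2

/-- derivative of `gg` in `x` -/
def gg' (σ t x : ℝ) : ℝ := (σ + x) / ((σ + x) ^ 2 + t ^ 2)

/-- antiderivative of `gg` in `x` -/
def GG (σ t x : ℝ) : ℝ :=
  (σ + x) * gg σ t x - x - t * Real.arctan (t / (σ + x))

lemma p_pos {σ t x : ℝ} (h : 0 < σ + x) : 0 < (σ + x) ^ 2 + t ^ 2 := by positivity

lemma hasDerivAt_gg {σ t x : ℝ} (h : 0 < σ + x) :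
    HasDerivAt (gg σ t) (gg' σ t x) x := by
  have h1 : HasDerivAt (fun y : ℝ => (σ + y) ^ 2 + t ^ 2) (2 * (σ + x)) x := by
    have : HasDerivAt (fun y : ℝ => σ + y) 1 x := (hasDerivAt_id x).const_add σ
    simpa using (this.pow 2).add_const (t ^ 2)
  have h2 := (h1.log (ne_of_gt (p_pos h))).div_const 2
  have : gg' σ t x = 2 * (σ + x) / ((σ + x) ^ 2 + t ^ 2) / 2 := by rw [gg']; ring
  rw [this]; exact h2

lemma hasDerivAt_GG {σ t x : ℝ} (h : 0 < σ + x) :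
    HasDerivAt (GG σ t) (gg σ t x) x := by
  have hid : HasDerivAt (fun y : ℝ => σ + y) 1 x := (hasDerivAt_id x).const_add σ
  have h1 : HasDerivAt (fun y : ℝ => (σ + y) * gg σ t y)
      (1 * gg σ t x + (σ + x) * gg' σ t x) x := hid.mul (hasDerivAt_gg h)
  have h2 : HasDerivAt (fun y : ℝ => t / (σ + y)) (-t / (σ + x) ^ 2) x := by
    have : HasDerivAt (fun y : ℝ => t / (σ + y)) ((0 * (σ + x) - t * 1) / (σ + x) ^ 2) x :=
      ((hasDerivAt_const x t).div hid (ne_of_gt h))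
    convert this using 1
    ring
  have h3 : HasDerivAt (fun y : ℝ => t * Real.arctan (t / (σ + y)))
      (t * ((1 / (1 + (t / (σ + x)) ^ 2)) * (-t / (σ + x) ^ 2))) x :=
    by have := ((Real.hasDerivAt_arctan (t / (σ + x))).comp x h2).const_mul t; exact this
  have h4 : HasDerivAt (GG σ t)
      (1 * gg σ t x + (σ + x) * gg' σ t x - 1 -
        t * ((1 / (1 + (t / (σ + x)) ^ 2)) * (-t / (σ + x) ^ 2))) x :=
    (h1.sub (hasDerivAt_id x)).sub h3
  convert h4 using 1
  have hp := p_pos (t := t) h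
  rw [gg']
  field_simp
  ring


-- === from p2.lean ===

lemma gg'_lip {σ t k x y : ℝ} (hk : 0 < σ + k) (hx : k ≤ x) (hy : k ≤ y) :
    |gg' σ t x - gg' σ t y| ≤ |x - y| / (σ + k) ^ 2 := by
  have ha : 0 < σ + x := by linarith
  have hb : 0 < σ + y := by linarith
  have hpx := p_pos (t := t) ha
  have hpy := p_pos (t := t) hb
  have key : gg' σ t x - gg' σ t y =
      ((x - y) * (t ^ 2 - (σ + x) * (σ + y))) / (((σ + x) ^ 2 + t ^ 2) * ((σ + y) ^ 2 + t ^ 2)) := by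
    rw [gg', gg']
    field_simp
    ring
  rw [key, abs_div, abs_mul]
  rw [abs_of_pos (by positivity : (0:ℝ) < ((σ + x) ^ 2 + t ^ 2) * ((σ + y) ^ 2 + t ^ 2))]
  rw [div_le_div_iff₀ (by positivity) (by positivity)]
  have hm2 : (σ + k) ^ 2 ≤ (σ + x) * (σ + y) := by nlinarith
  have h1 : |t ^ 2 - (σ + x) * (σ + y)| * (σ + k) ^ 2 ≤
      ((σ + x) ^ 2 + t ^ 2) * ((σ + y) ^ 2 + t ^ 2) := by
    rcases abs_cases (t ^ 2 - (σ + x) * (σ + y)) with ⟨h, _⟩ | ⟨h, _⟩ <;> rw [h] <;>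
      nlinarith [hm2, sq_nonneg ((σ + x) - (σ + y)), sq_nonneg t, mul_pos ha hb,
        sq_nonneg (t * (σ + x)), sq_nonneg (t * (σ + y)), sq_nonneg ((σ + x) * (σ + y)),
        mul_pos hk hk]
  calc |x - y| * |t ^ 2 - (σ + x) * (σ + y)| * (σ + k) ^ 2
      = |x - y| * (|t ^ 2 - (σ + x) * (σ + y)| * (σ + k) ^ 2) := by ring
    _ ≤ |x - y| * (((σ + x) ^ 2 + t ^ 2) * ((σ + y) ^ 2 + t ^ 2)) := by
        exact mul_le_mul_of_nonneg_left h1 (abs_nonneg _)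


-- === from p3.lean ===
lemma gg'_contOn {σ t : ℝ} {A : Set ℝ} (hA : ∀ x ∈ A, 0 < σ + x) :
    ContinuousOn (gg' σ t) A := by
  apply ContinuousOn.div
  · fun_prop
  · fun_prop
  · exact fun x hx => ne_of_gt (p_pos (hA x hx))

lemma gg_contOn {σ t : ℝ} {A : Set ℝ} (hA : ∀ x ∈ A, 0 < σ + x) :
    ContinuousOn (gg σ t) A :=
  fun x hx => ((hasDerivAt_gg (hA x hx)).continuousAt).continuousWithinAt

lemma trap {σ t k : ℝ} (hk : 0 < σ + k) :
    |(gg σ t k + gg σ t (k + 1)) / 2 - ∫ x in k..(k + 1), gg σ t x| ≤ 1 / (4 * (σ + k) ^ 2) := by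
  have hkk : k ≤ k + 1 := by linarith
  have huIcc : uIcc k (k + 1) = Icc k (k + 1) := uIcc_of_le hkk
  have hApos : ∀ x ∈ Icc k (k + 1), 0 < σ + x := fun x hx => by
    have := hx.1; linarith
  set c : ℝ := k + 1 / 2 with hc
  have hu : ∀ x ∈ uIcc k (k + 1), HasDerivAt (fun y : ℝ => y - c) 1 x := fun x _ => by
    simpa using (hasDerivAt_id x).sub_const c
  have hv : ∀ x ∈ uIcc k (k + 1), HasDerivAt (gg σ t) (gg' σ t x) x := fun x hx => by
    rw [huIcc] at hx; exact hasDerivAt_gg (hApos x hx)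
  have hu' : IntervalIntegrable (fun _ : ℝ => (1 : ℝ)) MeasureTheory.volume k (k + 1) :=
    intervalIntegrable_const
  have hv' : IntervalIntegrable (gg' σ t) MeasureTheory.volume k (k + 1) := by
    apply ContinuousOn.intervalIntegrable; rw [huIcc]; exact gg'_contOn hApos
  have hgint : IntervalIntegrable (gg σ t) MeasureTheory.volume k (k + 1) := by
    apply ContinuousOn.intervalIntegrable; rw [huIcc]; exact gg_contOn hApos
  have ibp := integral_mul_deriv_eq_deriv_mul hu hv hu' hv'
  -- ibp : ∫ x in k..k+1, (x - c) * gg' σ t x = (k+1-c) * gg σ t (k+1) - (k-c)*gg σ t k - ∫ 1 * gg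
  have hzero : (∫ x in k..(k + 1), (x - c)) = 0 := by
    rw [intervalIntegral.integral_sub intervalIntegrable_id intervalIntegrable_const,
      integral_id, integral_const]
    simp [hc]; ring
  have hsplit : (∫ x in k..(k + 1), (x - c) * (gg' σ t x - gg' σ t c)) =
      (gg σ t k + gg σ t (k + 1)) / 2 - ∫ x in k..(k + 1), gg σ t x := by
    have hintg1 : IntervalIntegrable (fun x : ℝ => (x - c) * gg' σ t x)
        MeasureTheory.volume k (k + 1) := by
      apply ContinuousOn.intervalIntegrable
      apply ContinuousOn.mul (by fun_prop)
      rw [huIcc]; exact gg'_contOn hApos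
    have hintg2 : IntervalIntegrable (fun x : ℝ => (x - c) * gg' σ t c)
        MeasureTheory.volume k (k + 1) := by
      apply ContinuousOn.intervalIntegrable; fun_prop
    have e1 : (∫ x in k..(k + 1), (x - c) * (gg' σ t x - gg' σ t c)) =
        (∫ x in k..(k + 1), (x - c) * gg' σ t x) - ∫ x in k..(k + 1), (x - c) * gg' σ t c := by
      rw [← intervalIntegral.integral_sub hintg1 hintg2]
      congr 1; ext x; ring
    have e2 : (∫ x in k..(k + 1), (x - c) * gg' σ t c) = 0 := by
      rw [intervalIntegral.integral_mul_const, hzero, zero_mul]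
    rw [e1, e2, ibp]
    have e3 : (∫ x in k..(k + 1), 1 * gg σ t x) = ∫ x in k..(k + 1), gg σ t x := by
      congr 1; ext x; ring
    rw [e3, hc]; ring
  rw [← hsplit]
  have hb : ∀ x ∈ Set.uIoc k (k + 1), ‖(x - c) * (gg' σ t x - gg' σ t c)‖ ≤ 1 / (4 * (σ + k) ^ 2) := by
    intro x hx
    rw [Set.uIoc_of_le hkk] at hx
    have hx1 : k ≤ x := le_of_lt hx.1
    have hx2 : x ≤ k + 1 := hx.2
    have habs : |x - c| ≤ 1 / 2 := by
      rw [abs_le]; constructor <;> simp only [hc] <;> linarith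
    have hlip := gg'_lip (t := t) hk hx1 (by simp only [hc]; linarith : k ≤ c)
    rw [norm_mul, Real.norm_eq_abs, Real.norm_eq_abs]
    calc |x - c| * |gg' σ t x - gg' σ t c| ≤ (1 / 2) * (|x - c| / (σ + k) ^ 2) :=
          mul_le_mul habs hlip (abs_nonneg _) (by norm_num)
      _ ≤ (1 / 2) * ((1 / 2) / (σ + k) ^ 2) := by gcongr
      _ = 1 / (4 * (σ + k) ^ 2) := by field_simp; ring
  have := intervalIntegral.norm_integral_le_of_norm_le_const hb
  rw [Real.norm_eq_abs] at this
  calc |∫ x in k..(k + 1), (x - c) * (gg' σ t x - gg' σ t c)| ≤ 1 / (4 * (σ + k) ^ 2) * |k + 1 - k| := this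
    _ = 1 / (4 * (σ + k) ^ 2) := by simp


-- === from p4.lean ===
lemma sum_inv_sq (n : ℕ) : ∑ k ∈ Finset.range n, (1 : ℝ) / ((k : ℝ) + 1 / 2) ^ 2 ≤ 5 := by
  rcases Nat.eq_zero_or_pos n with rfl | hn
  · simp
  · have key : ∀ m : ℕ, 1 ≤ m →
        ∑ k ∈ Finset.range m, (1 : ℝ) / ((k : ℝ) + 1 / 2) ^ 2 ≤ 5 - 1 / (m : ℝ) := by
      intro m hm
      induction m, hm using Nat.le_induction with
      | base => norm_num
      | succ m hm ih =>
        rw [Finset.sum_range_succ]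
        have hm1 : (1 : ℝ) ≤ (m : ℝ) := by exact_mod_cast hm
        have h1 : (1 : ℝ) / ((m : ℝ) + 1 / 2) ^ 2 ≤ 1 / (m : ℝ) - 1 / ((m : ℝ) + 1) := by
          rw [div_sub_div _ _ (by linarith) (by linarith),
            div_le_div_iff₀ (by positivity) (by positivity)]
          nlinarith
        push_cast
        linarith [ih]
    have h5 : (0:ℝ) < (n:ℝ) := by exact_mod_cast hn
    have h6 : (0:ℝ) ≤ 1 / (n:ℝ) := by positivity
    linarith [key n hn]

lemma sum_gg_eq (σ t : ℝ) (n : ℕ) :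
    ∑ k ∈ Finset.range (n + 1), gg σ t k =
      (∑ k ∈ Finset.range n, (gg σ t k + gg σ t (k + 1)) / 2) + (gg σ t 0 + gg σ t n) / 2 := by
  induction n with
  | zero => simp
  | succ n ih =>
    rw [Finset.sum_range_succ (f := fun k => gg σ t k), ih,
      Finset.sum_range_succ (f := fun k => (gg σ t k + gg σ t (k + 1)) / 2)]
    push_cast
    ring

lemma integral_adjacent {σ t : ℝ} (hσ : 0 < σ) (n : ℕ) :
    ∫ x in (0:ℝ)..(n:ℝ), gg σ t x = ∑ k ∈ Finset.range n, ∫ x in (k:ℝ)..((k:ℝ) + 1), gg σ t x := by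
  have h := intervalIntegral.sum_integral_adjacent_intervals (a := fun k : ℕ => (k : ℝ))
    (f := gg σ t) (μ := MeasureTheory.volume) (n := n) ?_
  · push_cast at h
    exact h.symm
  · intro k _
    apply ContinuousOn.intervalIntegrable
    apply gg_contOn
    intro x hx
    rw [Set.uIcc_of_le (by push_cast; linarith : ((k:ℕ):ℝ) ≤ ((k+1:ℕ):ℝ))] at hx
    have h1 := hx.1
    have h2 : (0:ℝ) ≤ ((k:ℕ):ℝ) := Nat.cast_nonneg k
    nlinarith

lemma sum_error {σ t : ℝ} (hσ : 1 / 2 ≤ σ) {n : ℕ} (hn : 1 ≤ n) :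
    |(∑ k ∈ Finset.range (n + 1), gg σ t k) - (∫ x in (0:ℝ)..(n:ℝ), gg σ t x)
      - (gg σ t 0 + gg σ t n) / 2| ≤ 2 := by
  have hσ0 : 0 < σ := by linarith
  rw [sum_gg_eq, integral_adjacent hσ0]
  have heq : (∑ k ∈ Finset.range n, (gg σ t k + gg σ t (k + 1)) / 2) + (gg σ t 0 + gg σ t n) / 2
      - (∑ k ∈ Finset.range n, ∫ x in (k:ℝ)..((k:ℝ) + 1), gg σ t x) - (gg σ t 0 + gg σ t n) / 2
      = ∑ k ∈ Finset.range n, ((gg σ t k + gg σ t (k + 1)) / 2 - ∫ x in (k:ℝ)..((k:ℝ) + 1), gg σ t x) := by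
    rw [Finset.sum_sub_distrib]; ring
  rw [heq]
  calc |∑ k ∈ Finset.range n, ((gg σ t k + gg σ t (k + 1)) / 2 - ∫ x in (k:ℝ)..((k:ℝ) + 1), gg σ t x)|
      ≤ ∑ k ∈ Finset.range n, |(gg σ t k + gg σ t (k + 1)) / 2 - ∫ x in (k:ℝ)..((k:ℝ) + 1), gg σ t x| :=
        Finset.abs_sum_le_sum_abs _ _
    _ ≤ ∑ k ∈ Finset.range n, 1 / (4 * (σ + k) ^ 2) := by
        apply Finset.sum_le_sum
        intro k _
        exact trap (by positivity)
    _ ≤ ∑ k ∈ Finset.range n, (1 / 4) * (1 / ((k : ℝ) + 1 / 2) ^ 2) := by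
        apply Finset.sum_le_sum
        intro k _
        have hd : ((k:ℝ) + 1 / 2) ^ 2 ≤ (σ + (k:ℝ)) ^ 2 := by
          nlinarith [Nat.cast_nonneg (α := ℝ) k]
        have h1 : 1 / (4 * (σ + (k:ℝ)) ^ 2) ≤ 1 / (4 * ((k:ℝ) + 1 / 2) ^ 2) :=
          one_div_le_one_div_of_le (by positivity) (by linarith)
        calc 1 / (4 * (σ + (k:ℝ)) ^ 2) ≤ 1 / (4 * ((k:ℝ) + 1 / 2) ^ 2) := h1
          _ = (1 / 4) * (1 / ((k:ℝ) + 1 / 2) ^ 2) := by rw [mul_one_div, div_div]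
    _ = (1 / 4) * ∑ k ∈ Finset.range n, (1 : ℝ) / ((k : ℝ) + 1 / 2) ^ 2 := by
        rw [Finset.mul_sum]
    _ ≤ (1 / 4) * 5 := by
        apply mul_le_mul_of_nonneg_left (sum_inv_sq n) (by norm_num)
    _ ≤ 2 := by norm_num

lemma integral_gg {σ t : ℝ} (hσ : 0 < σ) (n : ℕ) :
    ∫ x in (0:ℝ)..(n:ℝ), gg σ t x = GG σ t n - GG σ t 0 := by
  apply intervalIntegral.integral_eq_sub_of_hasDerivAt
  · intro x hx
    rw [Set.uIcc_of_le (by positivity : (0:ℝ) ≤ (n:ℝ))] at hx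
    exact hasDerivAt_GG (by nlinarith [hx.1])
  · apply ContinuousOn.intervalIntegrable
    apply gg_contOn
    intro x hx
    rw [Set.uIcc_of_le (by positivity : (0:ℝ) ≤ (n:ℝ))] at hx
    nlinarith [hx.1]


-- === from p5.lean ===
lemma log_abs_of_repos {s : ℂ} (x : ℝ) (h : 0 < s.re + x) :
    Real.log (‖s + x‖) = gg s.re s.im x := by
  have hre : (s + (x:ℂ)).re = s.re + x := by simp
  have him : (s + (x:ℂ)).im = s.im := by simp
  rw [Complex.norm_def, Complex.normSq_apply, hre, him,
    show (s.re + x) * (s.re + x) + s.im * s.im = (s.re + x) ^ 2 + s.im ^ 2 by ring,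
    Real.log_sqrt (by positivity), gg]

lemma log_abs_GammaSeq {s : ℂ} (hσ : 1 / 2 ≤ s.re) {n : ℕ} (hn : 1 ≤ n) :
    Real.log (‖Complex.GammaSeq s n‖) =
      s.re * Real.log n + Real.log (n ! : ℝ) - ∑ k ∈ Finset.range (n + 1), gg s.re s.im k := by
  have hspos : ∀ k : ℕ, 0 < s.re + (k : ℝ) := fun k => by
    have : (0:ℝ) ≤ k := Nat.cast_nonneg k
    linarith
  have hsne : ∀ k : ℕ, s + (k : ℂ) ≠ 0 := fun k => by
    intro h
    have : (s + (k:ℂ)).re = 0 := by rw [h]; simp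
    simp at this
    have := hspos k
    linarith
  have hnpos : (0:ℝ) < n := by exact_mod_cast hn
  unfold Complex.GammaSeq
  rw [norm_div, norm_mul]
  have h1 : ‖(n:ℂ) ^ s‖ = (n:ℝ) ^ s.re := by
    rw [show ((n:ℂ)) = (((n:ℝ)):ℂ) by norm_cast]
    exact Complex.norm_cpow_eq_rpow_re_of_pos hnpos s
  have h2 : ‖((n ! : ℕ) : ℂ)‖ = ((n ! : ℕ) : ℝ) := by
    rw [show (((n !: ℕ)):ℂ) = ((((n !:ℕ)):ℝ):ℂ) by norm_cast]
    exact Complex.norm_real _ |>.trans (Real.norm_of_nonneg (by positivity))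
  have h3 : ‖∏ j ∈ Finset.range (n + 1), (s + (j:ℕ))‖ =
      ∏ j ∈ Finset.range (n + 1), ‖s + (j:ℕ)‖ := by
    exact norm_prod _ _
  rw [h1, h2, h3]
  rw [Real.log_div (by positivity) (by
    apply Finset.prod_ne_zero_iff.mpr
    intro j _
    exact fun h => hsne j (by rwa [norm_eq_zero] at h))]
  rw [Real.log_mul (by positivity) (by positivity)]
  rw [Real.log_rpow hnpos]
  rw [Real.log_prod (fun j _ => fun h => hsne j (by rwa [norm_eq_zero] at h))]
  congr 1
  apply Finset.sum_congr rfl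
  intro j _
  exact log_abs_of_repos (j : ℝ) (hspos j)

lemma tendsto_A (σ t : ℝ) (hσ : 1 / 2 ≤ σ) :
    Tendsto (fun n : ℕ => σ * Real.log n + Real.log (n ! : ℝ) - GG σ t n - gg σ t n / 2)
      atTop (𝓝 (Real.log (Real.sqrt π) + Real.log (Real.sqrt 2) - σ)) := by
  have hσ0 : 0 < σ := by linarith
  -- limit pieces
  have hcast : Tendsto (fun n : ℕ => (n : ℝ)) atTop atTop := tendsto_natCast_atTop_atTop
  have hσn : Tendsto (fun n : ℕ => σ + (n : ℝ)) atTop atTop :=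
    tendsto_atTop_add_const_left _ σ hcast
  -- 1: log stirlingSeq
  have h1 : Tendsto (fun n : ℕ => Real.log (Stirling.stirlingSeq n)) atTop
      (𝓝 (Real.log (Real.sqrt π))) :=
    ((Real.continuousAt_log (by positivity)).tendsto).comp Stirling.tendsto_stirlingSeq_sqrt_pi
  -- 3: t * arctan (t / (σ + n))
  have hdiv : Tendsto (fun n : ℕ => t / (σ + (n:ℝ))) atTop (𝓝 0) :=
    Tendsto.div_atTop tendsto_const_nhds hσn
  have h3 : Tendsto (fun n : ℕ => t * Real.arctan (t / (σ + (n:ℝ)))) atTop (𝓝 0) := by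
    have := (Real.continuous_arctan.tendsto 0).comp hdiv
    rw [Real.arctan_zero] at this
    simpa using this.const_mul t
  -- 4: (σ + n + 1/2) * log (1 + σ/n) → σ
  have h4a : Tendsto (fun n : ℕ => (n:ℝ) * Real.log (1 + σ / (n:ℝ))) atTop (𝓝 σ) :=
    (Real.tendsto_mul_log_one_add_div_atTop σ).comp hcast
  have hdiv2 : Tendsto (fun n : ℕ => σ / (n:ℝ)) atTop (𝓝 0) :=
    Tendsto.div_atTop tendsto_const_nhds hcast
  have h4b : Tendsto (fun n : ℕ => Real.log (1 + σ / (n:ℝ))) atTop (𝓝 0) := by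
    have h0 : Tendsto (fun n : ℕ => 1 + σ / (n:ℝ)) atTop (𝓝 1) := by
      simpa using hdiv2.const_add 1
    have := ((Real.continuousAt_log (by norm_num)).tendsto).comp h0
    simpa [Function.comp_def] using this
  have h4 : Tendsto (fun n : ℕ => (σ + (n:ℝ) + 1/2) * Real.log (1 + σ / (n:ℝ))) atTop (𝓝 σ) := by
    have := h4a.add ((h4b.const_mul (σ + 1/2)))
    have heq : ∀ n : ℕ, (σ + (n:ℝ) + 1/2) * Real.log (1 + σ / (n:ℝ)) =
        (n:ℝ) * Real.log (1 + σ / (n:ℝ)) + (σ + 1/2) * Real.log (1 + σ / (n:ℝ)) := by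
      intro n; ring
    simp only [heq]
    simpa using this
  -- 5: (σ + n + 1/2) * log (1 + t^2/(σ+n)^2) / 2 → 0
  have h5 : Tendsto (fun n : ℕ => (σ + (n:ℝ) + 1/2) *
      Real.log (1 + t^2 / (σ + (n:ℝ))^2) / 2) atTop (𝓝 0) := by
    have hub : Tendsto (fun n : ℕ => 2 * t^2 / (σ + (n:ℝ))) atTop (𝓝 0) :=
      Tendsto.div_atTop tendsto_const_nhds hσn
    apply squeeze_zero' (g := fun n : ℕ => 2 * t^2 / (σ + (n:ℝ)))
    · filter_upwards [eventually_ge_atTop 0] with n _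
      have hnn : (0:ℝ) ≤ (n:ℝ) := Nat.cast_nonneg n
      have hpos : 0 < σ + (n:ℝ) := by linarith
      have hq : (0:ℝ) ≤ t^2 / (σ + (n:ℝ))^2 := by positivity
      have hlognn : (0:ℝ) ≤ Real.log (1 + t^2 / (σ + (n:ℝ))^2) :=
        Real.log_nonneg (by linarith)
      have hco : (0:ℝ) ≤ σ + (n:ℝ) + 1/2 := by linarith
      exact div_nonneg (mul_nonneg hco hlognn) (by norm_num)
    · filter_upwards [eventually_ge_atTop 1] with n hn
      have hn1 : (1:ℝ) ≤ (n:ℝ) := by exact_mod_cast hn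
      have hpos : 0 < σ + (n:ℝ) := by linarith
      have hlog : Real.log (1 + t^2 / (σ + (n:ℝ))^2) ≤ t^2 / (σ + (n:ℝ))^2 := by
        have := Real.log_le_sub_one_of_pos (show (0:ℝ) < 1 + t^2/(σ+(n:ℝ))^2 by positivity)
        linarith
      have hco : σ + (n:ℝ) + 1/2 ≤ 2 * (σ + (n:ℝ)) := by linarith
      have hLnn : (0:ℝ) ≤ Real.log (1 + t^2 / (σ + (n:ℝ))^2) := by
        have : (0:ℝ) ≤ t^2 / (σ + (n:ℝ))^2 := by positivity
        exact Real.log_nonneg (by linarith)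
      have hmul := mul_le_mul hco hlog hLnn (by positivity)
      calc (σ + (n:ℝ) + 1/2) * Real.log (1 + t^2 / (σ + (n:ℝ))^2) / 2
          ≤ (2 * (σ + (n:ℝ))) * (t^2 / (σ + (n:ℝ))^2) / 2 := by linarith
        _ = t^2 / (σ + (n:ℝ)) := by field_simp
        _ ≤ 2 * t^2 / (σ + (n:ℝ)) := by gcongr <;> nlinarith [sq_nonneg t]
    · exact hub
  -- combine
  have hE : Tendsto (fun n : ℕ => Real.log (Stirling.stirlingSeq n) + Real.log (Real.sqrt 2)
      + t * Real.arctan (t / (σ + (n:ℝ)))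
      - (σ + (n:ℝ) + 1/2) * Real.log (1 + σ / (n:ℝ))
      - (σ + (n:ℝ) + 1/2) * Real.log (1 + t^2 / (σ + (n:ℝ))^2) / 2) atTop
      (𝓝 (Real.log (Real.sqrt π) + Real.log (Real.sqrt 2) - σ)) := by
    have := (((h1.add (tendsto_const_nhds (x := Real.log (Real.sqrt 2)))).add h3).sub h4).sub h5
    simpa using this
  apply hE.congr'
  filter_upwards [eventually_ge_atTop 1] with n hn
  have hn1 : (1:ℝ) ≤ (n:ℝ) := by exact_mod_cast hn
  have hnpos : (0:ℝ) < (n:ℝ) := by linarith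
  have hσn : (0:ℝ) < σ + (n:ℝ) := by linarith
  have hL2pos : (0:ℝ) < 1 + σ / (n:ℝ) := by positivity
  have hL1pos : (0:ℝ) < 1 + t^2 / (σ + (n:ℝ))^2 := by positivity
  -- log n! expansion
  have hstpos : 0 < Stirling.stirlingSeq n := by
    rcases Nat.exists_eq_add_of_le hn with ⟨m, rfl⟩
    simpa [add_comm] using Stirling.stirlingSeq'_pos m
  have hfact : ((n ! : ℕ) : ℝ) = Stirling.stirlingSeq n *
      (Real.sqrt (2 * n) * ((n:ℝ) / Real.exp 1) ^ n) := by
    rw [Stirling.stirlingSeq]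
    field_simp
  have hlogfact : Real.log ((n ! : ℕ) : ℝ) = Real.log (Stirling.stirlingSeq n)
      + (Real.log (Real.sqrt 2) + Real.log (n:ℝ) / 2) + (n:ℝ) * (Real.log (n:ℝ) - 1) := by
    rw [hfact, Real.log_mul (ne_of_gt hstpos) (by positivity),
      Real.log_mul (by positivity) (by positivity),
      show (2 * (n:ℝ)) = 2 * (n:ℝ) by rfl]
    rw [show Real.sqrt (2 * (n:ℝ)) = Real.sqrt 2 * Real.sqrt (n:ℝ) from Real.sqrt_mul (by norm_num) _,
      Real.log_mul (by positivity) (by positivity), Real.log_sqrt hnpos.le,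
      Real.log_pow, Real.log_div (ne_of_gt hnpos) (Real.exp_ne_zero 1), Real.log_exp]
    push_cast
    ring
  -- gg expansion
  have hggn : gg σ t (n:ℝ) = Real.log (n:ℝ) + Real.log (1 + σ / (n:ℝ))
      + Real.log (1 + t^2 / (σ + (n:ℝ))^2) / 2 := by
    have e1 : (σ + (n:ℝ))^2 + t^2 = ((n:ℝ) * (1 + σ / (n:ℝ)))^2 * (1 + t^2 / (σ + (n:ℝ))^2) := by
      have e0 : (n:ℝ) * (1 + σ / (n:ℝ)) = σ + (n:ℝ) := by field_simp; ring
      rw [e0]; field_simp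
    rw [gg, e1, Real.log_mul (by positivity) (ne_of_gt hL1pos),
      Real.log_pow, Real.log_mul (ne_of_gt hnpos) (ne_of_gt hL2pos)]
    push_cast
    ring
  rw [GG, hlogfact, hggn]
  ring


-- === from p6.lean ===
lemma arg_eq_arctan {s : ℂ} (h : 0 < s.re) : s.arg = Real.arctan (s.im / s.re) := by
  have h1 : |s.arg| < π / 2 := Complex.abs_arg_lt_pi_div_two_iff.mpr (Or.inl h)
  rw [abs_lt] at h1
  rw [← Complex.tan_arg, Real.arctan_tan h1.1 h1.2]

lemma gg_zero (s : ℂ) : gg s.re s.im 0 = Real.log (‖s‖) := by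
  rw [Complex.norm_def, Complex.normSq_apply, gg,
    show (s.re + 0) ^ 2 + s.im ^ 2 = s.re * s.re + s.im * s.im by ring,
    Real.log_sqrt (by nlinarith [sq_nonneg s.re, sq_nonneg s.im, mul_self_nonneg s.re, mul_self_nonneg s.im])]

/-- Core two-sided Stirling estimate on the half-plane re ≥ 1/2. -/
lemma core {s : ℂ} (hσ : 1 / 2 ≤ s.re) :
    |Real.log (‖Complex.Gamma s‖) -
      ((s.re - 1 / 2) * Real.log (‖s‖) - s.arg * s.im - s.re)| ≤ 4 := by
  set σ := s.re
  set t := s.im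
  have hσ0 : 0 < σ := by linarith
  have hsne : s ≠ 0 := fun h => by
    have : σ = 0 := by simp [σ, h]
    linarith
  have hΓne : Complex.Gamma s ≠ 0 := by
    apply Complex.Gamma_ne_zero
    intro m hm
    have hre : σ = -(m:ℝ) := by simp [σ, hm]
    have hm0 : (0:ℝ) ≤ m := Nat.cast_nonneg m
    linarith
  have habsΓ : 0 < ‖Complex.Gamma s‖ := norm_pos_iff.mpr hΓne
  -- limit of log abs GammaSeq
  have hDlim : Tendsto (fun n : ℕ => Real.log (‖Complex.GammaSeq s n‖)) atTop
      (𝓝 (Real.log (‖Complex.Gamma s‖))) := by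
    have h0 : Tendsto (fun n : ℕ => ‖Complex.GammaSeq s n‖) atTop
        (𝓝 (‖Complex.Gamma s‖)) :=
      (continuous_norm.tendsto _).comp (Complex.GammaSeq_tendsto_Gamma s)
    exact ((Real.continuousAt_log (ne_of_gt habsΓ)).tendsto).comp h0
  have hA := tendsto_A σ t hσ
  -- the error sequence
  set L : ℝ := Real.log (Real.sqrt π) + Real.log (Real.sqrt 2) - σ with hL
  set ℓ : ℝ := L + (GG σ t 0 - gg σ t 0 / 2) - Real.log (‖Complex.Gamma s‖) with hℓ
  have hTlim : Tendsto (fun n : ℕ =>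
      (σ * Real.log n + Real.log (n ! : ℝ) - GG σ t n - gg σ t n / 2)
        + (GG σ t 0 - gg σ t 0 / 2)
        - Real.log (‖Complex.GammaSeq s n‖)) atTop (𝓝 ℓ) :=
    (hA.add_const _).sub hDlim
  have hbound : ∀ᶠ n : ℕ in atTop, |(σ * Real.log n + Real.log (n ! : ℝ) - GG σ t n - gg σ t n / 2)
        + (GG σ t 0 - gg σ t 0 / 2)
        - Real.log (‖Complex.GammaSeq s n‖)| ≤ 2 := by
    filter_upwards [eventually_ge_atTop 1] with n hn
    rw [log_abs_GammaSeq hσ hn]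
    have heq : (σ * Real.log n + Real.log (n ! : ℝ) - GG σ t n - gg σ t n / 2)
        + (GG σ t 0 - gg σ t 0 / 2)
        - (σ * Real.log n + Real.log (n ! : ℝ) - ∑ k ∈ Finset.range (n + 1), gg σ t k)
        = (∑ k ∈ Finset.range (n + 1), gg σ t k) - (GG σ t n - GG σ t 0)
            - (gg σ t 0 + gg σ t n) / 2 := by ring
    rw [heq, ← integral_gg (t := t) hσ0 n]
    exact sum_error hσ hn
  have hℓ2 : |ℓ| ≤ 2 := by
    have h1 : Tendsto (fun n : ℕ => |(σ * Real.log n + Real.log (n ! : ℝ) - GG σ t n - gg σ t n / 2)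
        + (GG σ t 0 - gg σ t 0 / 2)
        - Real.log (‖Complex.GammaSeq s n‖)|) atTop (𝓝 |ℓ|) :=
      hTlim.abs
    exact le_of_tendsto h1 hbound
  -- unfold GG 0, gg 0
  have hGG0 : GG σ t 0 = σ * Real.log (‖s‖) - t * Real.arctan (t / σ) := by
    rw [GG, gg_zero s]
    simp [σ, t]
  have harg : Real.arctan (t / σ) = s.arg := (arg_eq_arctan hσ0).symm
  have hlogΓ : Real.log (‖Complex.Gamma s‖) =
      (σ - 1 / 2) * Real.log (‖s‖) - s.arg * t - σ
        + (Real.log (Real.sqrt π) + Real.log (Real.sqrt 2) - ℓ) := by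
    have : Real.log (‖Complex.Gamma s‖) = L + (GG σ t 0 - gg σ t 0 / 2) - ℓ := by
      rw [hℓ]; ring
    rw [this, hGG0, harg, gg_zero s, hL]
    ring
  rw [hlogΓ]
  have hπ1 : 0 ≤ Real.log (Real.sqrt π) := Real.log_nonneg (by
    rw [show (1:ℝ) = Real.sqrt 1 by simp]
    exact Real.sqrt_le_sqrt (by linarith [Real.pi_gt_three]))
  have hsqrtπ : Real.sqrt π ≤ 2 := by
    rw [show (2:ℝ) = Real.sqrt 4 by rw [show (4:ℝ) = 2^2 by norm_num, Real.sqrt_sq (by norm_num)]]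
    exact Real.sqrt_le_sqrt (by linarith [Real.pi_lt_d2])
  have hπ2 : Real.log (Real.sqrt π) ≤ 1 := by
    have := Real.log_le_sub_one_of_pos (show (0:ℝ) < Real.sqrt π by positivity)
    linarith
  have h21 : 0 ≤ Real.log (Real.sqrt 2) := Real.log_nonneg (by
    rw [show (1:ℝ) = Real.sqrt 1 by simp]
    exact Real.sqrt_le_sqrt (by norm_num))
  have hsqrt2 : Real.sqrt 2 ≤ 2 := by
    calc Real.sqrt 2 ≤ Real.sqrt 4 := Real.sqrt_le_sqrt (by norm_num)
      _ = 2 := by rw [show (4:ℝ) = 2^2 by norm_num, Real.sqrt_sq (by norm_num)]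
  have h22 : Real.log (Real.sqrt 2) ≤ 1 := by
    have := Real.log_le_sub_one_of_pos (show (0:ℝ) < Real.sqrt 2 by positivity)
    linarith
  have hsimp : (σ - 1 / 2) * Real.log (‖s‖) - s.arg * t - σ
        + (Real.log (Real.sqrt π) + Real.log (Real.sqrt 2) - ℓ)
        - ((σ - 1 / 2) * Real.log (‖s‖) - s.arg * t - σ)
      = Real.log (Real.sqrt π) + Real.log (Real.sqrt 2) - ℓ := by ring
  rw [hsimp, abs_le] at *
  constructor <;> linarith [hℓ2.1, hℓ2.2]


-- === from p7.lean ===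

lemma Gamma_ne_zero_of_re {s : ℂ} (hσ : 0 < s.re) : Complex.Gamma s ≠ 0 := by
  apply Complex.Gamma_ne_zero
  intro m hm
  have hre : s.re = -(m:ℝ) := by simp [hm]
  have hm0 : (0:ℝ) ≤ m := Nat.cast_nonneg m
  linarith

lemma core_upper {s : ℂ} (hσ : 1 / 2 ≤ s.re) :
    ‖Complex.Gamma s‖ ≤
      Real.exp ((s.re - 1 / 2) * Real.log (‖s‖) - s.arg * s.im - s.re + 4) := by
  have h := abs_le.mp (core hσ)
  have hpos : 0 < ‖Complex.Gamma s‖ :=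
    norm_pos_iff.mpr (Gamma_ne_zero_of_re (by linarith))
  calc ‖Complex.Gamma s‖ = Real.exp (Real.log (‖Complex.Gamma s‖)) :=
        (Real.exp_log hpos).symm
    _ ≤ _ := Real.exp_le_exp.mpr (by linarith [h.2])

lemma core_lower {s : ℂ} (hσ : 1 / 2 ≤ s.re) :
    Real.exp ((s.re - 1 / 2) * Real.log (‖s‖) - s.arg * s.im - s.re - 4) ≤
      ‖Complex.Gamma s‖ := by
  have h := abs_le.mp (core hσ)
  have hpos : 0 < ‖Complex.Gamma s‖ :=
    norm_pos_iff.mpr (Gamma_ne_zero_of_re (by linarith))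
  calc Real.exp ((s.re - 1 / 2) * Real.log (‖s‖) - s.arg * s.im - s.re - 4)
      ≤ Real.exp (Real.log (‖Complex.Gamma s‖)) := Real.exp_le_exp.mpr (by linarith [h.1])
    _ = ‖Complex.Gamma s‖ := Real.exp_log hpos

/-- Right half-plane final bound. -/
lemma right_half {s : ℂ} (hσ : 1 / 2 ≤ s.re) :
    ‖(Complex.Gamma s)⁻¹‖ ≤
      Real.exp (9 + (1 / 2 - s.re) * Real.log (1 + ‖s‖) + (s.arg * s.im + s.re)) := by
  have hΓ := Gamma_ne_zero_of_re (show 0 < s.re by linarith)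
  have hpos : 0 < ‖Complex.Gamma s‖ := norm_pos_iff.mpr hΓ
  rw [norm_inv]
  have h1 := inv_anti₀ (Real.exp_pos _) (core_lower hσ)
  rw [← Real.exp_neg] at h1
  refine h1.trans (Real.exp_le_exp.mpr ?_)
  -- need : -( (σ-1/2) log|s| - θt - σ - 4) ≤ 9 + (1/2-σ) log(1+|s|) + θt + σ
  have habs_pos : 0 < ‖s‖ := by
    apply norm_pos_iff.mpr
    intro h
    rw [h] at hσ
    simp at hσ
    linarith
  have hre_le : s.re ≤ ‖s‖ := Complex.re_le_norm s
  have hlog : Real.log (1 + ‖s‖) - Real.log (‖s‖) ≤ 1 / ‖s‖ := by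
    rw [← Real.log_div (by positivity) (ne_of_gt habs_pos)]
    have := Real.log_le_sub_one_of_pos (show 0 < (1 + ‖s‖) / ‖s‖ by positivity)
    have heq : (1 + ‖s‖) / ‖s‖ - 1 = 1 / ‖s‖ := by
      field_simp
      ring
    linarith
  have hkey : (s.re - 1 / 2) * (Real.log (1 + ‖s‖) - Real.log (‖s‖)) ≤ 1 := by
    calc (s.re - 1 / 2) * (Real.log (1 + ‖s‖) - Real.log (‖s‖))
        ≤ (s.re - 1 / 2) * (1 / ‖s‖) :=
          mul_le_mul_of_nonneg_left hlog (by linarith)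
      _ ≤ ‖s‖ * (1 / ‖s‖) := by
          apply mul_le_mul_of_nonneg_right (by linarith) (by positivity)
      _ = 1 := by field_simp
  nlinarith [hkey]

/-- Reflection identity for the reciprocal. -/
lemma refl_eq {s : ℂ} (hσ : s.re ≤ 1 / 2) :
    (Complex.Gamma s)⁻¹ = Complex.sin (π * s) * Complex.Gamma (1 - s) / π := by
  by_cases hΓ : Complex.Gamma s = 0
  · rw [hΓ, inv_zero]
    rw [Complex.Gamma_eq_zero_iff] at hΓ
    obtain ⟨m, hm⟩ := hΓ
    rw [hm, show (π : ℂ) * -(m:ℕ) = (-(m:ℤ) : ℤ) * π by push_cast; ring,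
      Complex.sin_int_mul_pi]
    simp
  · have hΓ1 : Complex.Gamma (1 - s) ≠ 0 := by
      apply Gamma_ne_zero_of_re
      simp only [Complex.sub_re, Complex.one_re]
      linarith
    have key := Complex.Gamma_mul_Gamma_one_sub s
    have hsin : Complex.sin (π * s) ≠ 0 := by
      intro h
      rw [h, div_zero] at key
      exact hΓ (by
        have := mul_eq_zero.mp key
        tauto)
    have hπ : (π : ℂ) ≠ 0 := by
      simp [Complex.ofReal_ne_zero]
    have h2 : Complex.Gamma s * (Complex.sin (π * s) * Complex.Gamma (1 - s) / π) = 1 := by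
      rw [show Complex.Gamma s * (Complex.sin (π * s) * Complex.Gamma (1 - s) / ↑π)
          = (Complex.Gamma s * Complex.Gamma (1 - s)) * Complex.sin (π * s) / ↑π by ring, key]
      field_simp
    exact inv_eq_of_mul_eq_one_right h2

lemma abs_sin_le {s : ℂ} (ht : 0 ≤ s.im) :
    ‖Complex.sin (π * s)‖ ≤ Real.exp (π * s.im) := by
  rw [Complex.sin]
  rw [norm_div, norm_mul, Complex.norm_I, mul_one, Complex.norm_two]
  have h1 : ‖Complex.exp (-(π * s) * Complex.I) - Complex.exp (π * s * Complex.I)‖ ≤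
      ‖Complex.exp (-(π * s) * Complex.I)‖ + ‖Complex.exp (π * s * Complex.I)‖ :=
    by
      exact norm_sub_le _ _
  have h2 : ‖Complex.exp (-(π * s) * Complex.I)‖ = Real.exp (π * s.im) := by
    rw [Complex.norm_exp]
    congr 1
    simp [Complex.mul_re]
  have h3 : ‖Complex.exp (π * s * Complex.I)‖ = Real.exp (-(π * s.im)) := by
    rw [Complex.norm_exp]
    congr 1
    simp [Complex.mul_re]
  rw [h2, h3] at h1
  have h4 : Real.exp (-(π * s.im)) ≤ Real.exp (π * s.im) := by
    apply Real.exp_le_exp.mpr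
    have := Real.pi_pos
    nlinarith
  calc ‖Complex.exp (-(π * s) * Complex.I) - Complex.exp (π * s * Complex.I)‖ / 2
      ≤ (Real.exp (π * s.im) + Real.exp (-(π * s.im))) / 2 := by linarith
    _ ≤ Real.exp (π * s.im) := by linarith


-- === from p8.lean ===

lemma arg_of_im_pos' {s : ℂ} (ht : 0 < s.im) :
    s.arg = π / 2 - Real.arctan (s.re / s.im) := by
  have hne : s ≠ 0 := fun h => by rw [h] at ht; simp at ht
  have h0 : 0 ≤ s.arg := Complex.arg_nonneg_iff.mpr ht.le
  have h1 : s.arg ≠ 0 := fun h => by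
    have := (Complex.arg_eq_zero_iff.mp h).2
    linarith
  have hpos : 0 < s.arg := lt_of_le_of_ne h0 (Ne.symm h1)
  have h2 : s.arg < π := lt_of_le_of_ne (Complex.arg_le_pi s) (fun h => by
    have := (Complex.arg_eq_pi_iff.mp h).2
    linarith)
  have h3 : Real.tan (π / 2 - s.arg) = s.re / s.im := by
    rw [Real.tan_pi_div_two_sub, Complex.tan_arg, inv_div]
  rw [← h3, Real.arctan_tan (by linarith) (by linarith)]
  ring

lemma arctan_sub_le {a b : ℝ} (h : a ≤ b) :
    Real.arctan b - Real.arctan a ≤ b - a := by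
  have hder : ∀ x : ℝ, HasDerivAt (fun x : ℝ => x - Real.arctan x) (1 - 1 / (1 + x ^ 2)) x :=
    fun x => (hasDerivAt_id x).sub (Real.hasDerivAt_arctan x)
  have hmono : MonotoneOn (fun x : ℝ => x - Real.arctan x) (Set.Icc a b) := by
    apply monotoneOn_of_deriv_nonneg (convex_Icc a b)
    · exact (continuous_id.sub Real.continuous_arctan).continuousOn
    · intro x _
      exact ((hder x).differentiableAt).differentiableWithinAt
    · intro x _
      rw [(hder x).deriv]
      have : 1 / (1 + x ^ 2) ≤ 1 := by
        rw [div_le_one (by positivity)]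
        nlinarith [sq_nonneg x]
      linarith
  have := hmono (Set.left_mem_Icc.mpr h) (Set.right_mem_Icc.mpr h) h
  simp only at this
  linarith

/-- The key angle estimate: for `im s = t ≥ 0`, `re s = σ ≤ 1/2`,
`t * (π + arg (1-s) - arg s) ≤ 5`. -/
lemma angle_est {s : ℂ} (hσ : s.re ≤ 1 / 2) (ht : 0 ≤ s.im) :
    s.im * (π + (1 - s).arg - s.arg) ≤ 5 := by
  have hre1s : 0 < (1 - s).re := by simp [Complex.sub_re]; linarith
  have him1s : (1 - s).im = -s.im := by simp
  have harg1s : (1 - s).arg = -Real.arctan (s.im / (1 - s).re) := by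
    rw [arg_eq_arctan hre1s, him1s, neg_div, Real.arctan_neg]
  rcases le_or_gt s.im 1 with h1 | h1
  · -- small t: crude bound
    rcases eq_or_lt_of_le ht with h0 | h0
    · rw [← h0]; norm_num
    · have hargs : 0 ≤ s.arg := Complex.arg_nonneg_iff.mpr ht
      have harg1 : (1 - s).arg ≤ π / 2 := by
        rw [harg1s]
        have : 0 ≤ Real.arctan (s.im / (1 - s).re) := by
          rw [← Real.arctan_zero]
          exact Real.arctan_strictMono.monotone (by positivity)
        linarith [Real.pi_pos]
      have hX : π + (1 - s).arg - s.arg ≤ 3 * π / 2 := by linarith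
      rcases le_or_gt (π + (1 - s).arg - s.arg) 0 with hX0 | hX0
      · have := mul_nonpos_of_nonneg_of_nonpos ht hX0
        linarith
      · calc s.im * (π + (1 - s).arg - s.arg) ≤ 1 * (3 * π / 2) :=
            mul_le_mul h1 hX hX0.le (by norm_num)
          _ ≤ 5 := by linarith [Real.pi_lt_d2]
  · -- large t: Lipschitz arctan argument
    have ht0 : 0 < s.im := by linarith
    have hargs : s.arg = π / 2 - Real.arctan (s.re / s.im) := arg_of_im_pos' ht0
    have hinv : Real.arctan (s.im / (1 - s).re) = π / 2 - Real.arctan ((1 - s).re / s.im) := by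
      rw [show s.im / (1 - s).re = ((1 - s).re / s.im)⁻¹ by rw [inv_div]]
      exact Real.arctan_inv_of_pos (by positivity)
    have hX : π + (1 - s).arg - s.arg =
        Real.arctan ((1 - s).re / s.im) + Real.arctan (s.re / s.im) := by
      rw [harg1s, hinv, hargs]; ring
    have hab : -(s.re / s.im) ≤ (1 - s).re / s.im := by
      rw [← neg_div]
      apply (div_le_div_iff_of_pos_right ht0).mpr
      simp only [Complex.sub_re, Complex.one_re]
      linarith
    have hkey := arctan_sub_le hab
    rw [Real.arctan_neg] at hkey
    have hsum : (1 - s).re / s.im + s.re / s.im = 1 / s.im := by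
      rw [← add_div]
      congr 1
      simp [Complex.sub_re]
    rw [hX]
    have hXle : Real.arctan ((1 - s).re / s.im) + Real.arctan (s.re / s.im) ≤ 1 / s.im := by
      linarith [hkey, hsum]
    calc s.im * (Real.arctan ((1 - s).re / s.im) + Real.arctan (s.re / s.im))
        ≤ s.im * (1 / s.im) := mul_le_mul_of_nonneg_left hXle ht0.le
      _ = 1 := by field_simp
      _ ≤ 5 := by norm_num
  

-- === from p9.lean ===

lemma left_half {s : ℂ} (hσ : s.re ≤ 1 / 2) (ht : 0 ≤ s.im) :
    ‖(Complex.Gamma s)⁻¹‖ ≤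
      Real.exp (9 + (1 / 2 - s.re) * Real.log (1 + ‖s‖) + (s.arg * s.im + s.re)) := by
  rw [refl_eq hσ, norm_div, norm_mul]
  have hπabs : ‖(π : ℂ)‖ = π := by
    rw [Complex.norm_real, Real.norm_of_nonneg Real.pi_pos.le]
  rw [hπabs]
  have hre1s : (1 - s).re = 1 - s.re := by simp
  have him1s : (1 - s).im = -s.im := by simp
  have hG := core_upper (s := 1 - s) (by rw [hre1s]; linarith)
  have hsin := abs_sin_le ht
  have habs1s : ‖1 - s‖ ≤ 1 + ‖s‖ := by
    calc ‖1 - s‖ ≤ ‖(1:ℂ)‖ + ‖s‖ := norm_sub_le 1 s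
      _ = 1 + ‖s‖ := by rw [norm_one]
  have habs1s_pos : 0 < ‖1 - s‖ := by
    apply norm_pos_iff.mpr
    intro h
    have : (1 - s).re = 0 := by rw [h]; simp
    rw [hre1s] at this
    linarith
  have hlog : Real.log (‖1 - s‖) ≤ Real.log (1 + ‖s‖) :=
    Real.log_le_log habs1s_pos habs1s
  have hmul : ((1 - s).re - 1 / 2) * Real.log (‖1 - s‖) ≤
      (1 / 2 - s.re) * Real.log (1 + ‖s‖) := by
    rw [hre1s, show (1 : ℝ) - s.re - 1 / 2 = 1 / 2 - s.re by ring]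
    exact mul_le_mul_of_nonneg_left hlog (by linarith)
  have hangle := angle_est hσ ht
  calc ‖Complex.sin (π * s)‖ * ‖Complex.Gamma (1 - s)‖ / π
      ≤ Real.exp (π * s.im) *
          Real.exp ((1 - s).re * Real.log (‖1 - s‖) -
            1 / 2 * Real.log (‖1 - s‖) - (1 - s).arg * (1 - s).im - (1 - s).re + 4) / π := by
        have hGG : ‖Complex.Gamma (1 - s)‖ ≤
            Real.exp ((1 - s).re * Real.log (‖1 - s‖) -
              1 / 2 * Real.log (‖1 - s‖) - (1 - s).arg * (1 - s).im - (1 - s).re + 4) :=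
          (core_upper (s := 1 - s) (by rw [hre1s]; linarith)).trans (le_of_eq (by congr 1; ring))
        gcongr <;> first | exact hsin | exact hGG
    _ ≤ Real.exp (π * s.im) *
          Real.exp ((1 - s).re * Real.log (‖1 - s‖) -
            1 / 2 * Real.log (‖1 - s‖) - (1 - s).arg * (1 - s).im - (1 - s).re + 4) :=
        div_le_self (by positivity) (by linarith [Real.pi_gt_three])
    _ = Real.exp (π * s.im + ((1 - s).re * Real.log (‖1 - s‖) -
            1 / 2 * Real.log (‖1 - s‖) - (1 - s).arg * (1 - s).im - (1 - s).re + 4)) :=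
        (Real.exp_add _ _).symm
    _ ≤ Real.exp (9 + (1 / 2 - s.re) * Real.log (1 + ‖s‖) + (s.arg * s.im + s.re)) := by
        apply Real.exp_le_exp.mpr
        rw [hre1s, him1s]
        rw [hre1s] at hmul
        have hmul' : (1 - s.re - 1 / 2) * Real.log (‖1 - s‖) ≤
            (1 / 2 - s.re) * Real.log (1 + ‖s‖) := hmul
        nlinarith [hmul', hangle]

/-- Main bound for `im s ≥ 0`. -/
lemma main_nonneg {s : ℂ} (ht : 0 ≤ s.im) :
    ‖(Complex.Gamma s)⁻¹‖ ≤
      Real.exp (9 + (1 / 2 - s.re) * Real.log (1 + ‖s‖) + (s.arg * s.im + s.re)) := by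
  rcases le_or_gt (1 / 2) s.re with h | h
  · exact right_half h
  · exact left_half h.le ht

/-- Main bound for all `s`. -/
lemma main_all (s : ℂ) :
    ‖(Complex.Gamma s)⁻¹‖ ≤
      Real.exp (9 + (1 / 2 - s.re) * Real.log (1 + ‖s‖) + (s.arg * s.im + s.re)) := by
  rcases le_or_gt 0 s.im with ht | ht
  · exact main_nonneg ht
  · have h := main_nonneg (s := (starRingEnd ℂ) s) (by simp; linarith)
    have habsΓ : ‖(Complex.Gamma ((starRingEnd ℂ) s))⁻¹‖ =
        ‖(Complex.Gamma s)⁻¹‖ := by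
      rw [Complex.Gamma_conj, ← map_inv₀ (starRingEnd ℂ), Complex.norm_conj]
    have hargpi : s.arg ≠ π := fun hpi => by
      have := (Complex.arg_eq_pi_iff.mp hpi).2
      linarith
    have harg : ((starRingEnd ℂ) s).arg = -s.arg := by
      rw [Complex.arg_conj]
      simp [hargpi]
    have hre : ((starRingEnd ℂ) s).re = s.re := by simp
    have him : ((starRingEnd ℂ) s).im = -s.im := by simp
    have habs : ‖(starRingEnd ℂ) s‖ = ‖s‖ := Complex.norm_conj s
    rw [habsΓ, harg, hre, him, habs] at h
    calc ‖(Complex.Gamma s)⁻¹‖ ≤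
        Real.exp (9 + (1 / 2 - s.re) * Real.log (1 + ‖s‖) + (-s.arg * -s.im + s.re)) := h
      _ = Real.exp (9 + (1 / 2 - s.re) * Real.log (1 + ‖s‖) + (s.arg * s.im + s.re)) := by
          ring_nf

end GammaEst


/-- There is a constant `C > 0` such that for all `s ∈ ℂ`,
`|1/Γ(s)| ≤ C (1 + |s|)^(1/2 - Re s) exp(arg(s)·Im(s) + Re(s))`, where `1/Γ` is the entire
reciprocal of the complex Gamma function (Mathlib's `Complex.Gamma` vanishes at the poles),
`arg` is the principal argument in `(-π, π]`, and the power is a real power of `1 + |s|`. -/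
theorem gamma_reciprocal_estimate :
    ∃ C : ℝ, 0 < C ∧ ∀ s : ℂ,
      ‖(Complex.Gamma s)⁻¹‖ ≤
        C * (1 + ‖s‖) ^ ((1 : ℝ) / 2 - s.re) *
          Real.exp (s.arg * s.im + s.re) := by
  refine ⟨Real.exp 9, Real.exp_pos 9, fun s => ?_⟩
  have h := GammaEst.main_all s
  have h1 : (0:ℝ) < 1 + ‖s‖ := by
    have := norm_nonneg s
    linarith
  rw [Real.rpow_def_of_pos h1, ← Real.exp_add, ← Real.exp_add]
  refine h.trans (Real.exp_le_exp.mpr (le_of_eq ?_))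
  ring
end
end

section
/- Let A_1,…,A_{n_A} be distinct nonzero complex numbers with multiplicities m_1,…,m_{n_A} ≥ 1, n = Σ_j m_j, and let l ∈ ℤ. Then the generalized Vandermonde matrix V_{A,m,l} is invertible. -/
open Complex Filter Set Finset
open scoped Real

noncomputable section

open Polynomial in
private lemma gv_key (n : ℕ) (v : Fin n → ℂ) (nA : ℕ) (A : Fin nA → ℂ)
    (hA : Function.Injective A) (hA0 : ∀ j, A j ≠ 0)
    (m : Fin nA → ℕ) (hn : n = ∑ j, m j) (l : ℤ)
    (H : ∀ (j : Fin nA) (r : ℕ), r < m j →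
      ∑ k : Fin n, v k * ((l - (k : ℕ) : ℤ) : ℂ) ^ r * A j ^ (l - (k : ℕ) : ℤ) = 0) :
    v = 0 := by
  classical
  rcases Nat.eq_zero_or_pos n with h0 | hn1
  · subst h0; exact funext fun k => k.elim0
  set t : ℤ := l - ((n : ℤ) - 1) with ht
  -- Step A : power conditions with natural exponents
  have hP : ∀ (j : Fin nA) (s : ℕ), s < m j →
      ∑ k : Fin n, v k * ((n - 1 - (k : ℕ) : ℕ) : ℂ) ^ s * A j ^ (n - 1 - (k : ℕ)) = 0 := by
    intro j s hs
    have ha := hA0 j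
    have hz : ∀ k : Fin n, (A j) ^ (n - 1 - (k : ℕ)) =
        (A j ^ t)⁻¹ * A j ^ (l - (k : ℕ) : ℤ) := by
      intro k
      have hk : ((n - 1 - (k : ℕ) : ℕ) : ℤ) = (l - (k : ℕ)) - t := by
        have := k.isLt; omega
      rw [← zpow_natCast, hk, zpow_sub₀ ha, div_eq_mul_inv, mul_comm]
    have hx : ∀ k : Fin n, ((n - 1 - (k : ℕ) : ℕ) : ℂ) = ((l - (k : ℕ) : ℤ) : ℂ) - (t : ℂ) := by
      intro k
      have hk : ((n - 1 - (k : ℕ) : ℕ) : ℤ) = (l - (k : ℕ)) - t := by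
        have := k.isLt; omega
      exact_mod_cast congrArg (fun z : ℤ => (z : ℂ)) hk
    calc ∑ k : Fin n, v k * ((n - 1 - (k : ℕ) : ℕ) : ℂ) ^ s * A j ^ (n - 1 - (k : ℕ))
        = ∑ k : Fin n, ∑ i ∈ Finset.range (s + 1),
            ((A j ^ t)⁻¹ * (-1 : ℂ) ^ (i + s) * (t : ℂ) ^ (s - i) * (s.choose i)) *
              (v k * ((l - (k : ℕ) : ℤ) : ℂ) ^ i * A j ^ (l - (k : ℕ) : ℤ)) := by
          refine Finset.sum_congr rfl fun k _ => ?_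
          rw [hz k, hx k, sub_pow, Finset.mul_sum, Finset.sum_mul]
          exact Finset.sum_congr rfl fun i _ => by ring
      _ = ∑ i ∈ Finset.range (s + 1),
            ((A j ^ t)⁻¹ * (-1 : ℂ) ^ (i + s) * (t : ℂ) ^ (s - i) * (s.choose i)) *
              ∑ k : Fin n, v k * ((l - (k : ℕ) : ℤ) : ℂ) ^ i * A j ^ (l - (k : ℕ) : ℤ) := by
          rw [Finset.sum_comm]
          exact Finset.sum_congr rfl fun i _ => by rw [Finset.mul_sum]
      _ = 0 := by
          refine Finset.sum_eq_zero fun i hi => ?_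
          rw [H j i (lt_of_le_of_lt (Nat.lt_succ_iff.mp (Finset.mem_range.mp hi)) hs), mul_zero]
  -- Step B : descending factorial conditions
  have hS : ∀ (j : Fin nA) (r : ℕ), r < m j →
      ∑ k : Fin n, v k * (((n - 1 - (k : ℕ)).descFactorial r : ℕ) : ℂ) *
        A j ^ (n - 1 - (k : ℕ)) = 0 := by
    intro j r hr
    have expand : ∀ k : Fin n, (((n - 1 - (k : ℕ)).descFactorial r : ℕ) : ℂ) =
        ∑ i ∈ Finset.range (r + 1),
          (descPochhammer ℂ r).coeff i * ((n - 1 - (k : ℕ) : ℕ) : ℂ) ^ i := by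
      intro k
      rw [← descPochhammer_eval_eq_descFactorial ℂ]
      exact Polynomial.eval_eq_sum_range' (by rw [descPochhammer_natDegree]; omega) _
    calc ∑ k : Fin n, v k * (((n - 1 - (k : ℕ)).descFactorial r : ℕ) : ℂ) *
          A j ^ (n - 1 - (k : ℕ))
        = ∑ k : Fin n, ∑ i ∈ Finset.range (r + 1), (descPochhammer ℂ r).coeff i *
            (v k * ((n - 1 - (k : ℕ) : ℕ) : ℂ) ^ i * A j ^ (n - 1 - (k : ℕ))) := by
          refine Finset.sum_congr rfl fun k _ => ?_
          rw [expand k, Finset.mul_sum, Finset.sum_mul]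
          exact Finset.sum_congr rfl fun i _ => by ring
      _ = ∑ i ∈ Finset.range (r + 1), (descPochhammer ℂ r).coeff i *
            ∑ k : Fin n, v k * ((n - 1 - (k : ℕ) : ℕ) : ℂ) ^ i * A j ^ (n - 1 - (k : ℕ)) := by
          rw [Finset.sum_comm]
          exact Finset.sum_congr rfl fun i _ => by rw [Finset.mul_sum]
      _ = 0 := by
          refine Finset.sum_eq_zero fun i hi => ?_
          rw [hP j i (lt_of_le_of_lt (Nat.lt_succ_iff.mp (Finset.mem_range.mp hi)) hr), mul_zero]
  -- the polynomial
  set q : ℂ[X] := ∑ k : Fin n, Polynomial.C (v k) * Polynomial.X ^ (n - 1 - (k : ℕ)) with hq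
  have hcoeff : ∀ k0 : Fin n, q.coeff (n - 1 - (k0 : ℕ)) = v k0 := by
    intro k0
    rw [hq, Polynomial.finset_sum_coeff, Finset.sum_eq_single k0]
    · simp
    · intro k _ hk
      rw [Polynomial.coeff_C_mul, Polynomial.coeff_X_pow, if_neg, mul_zero]
      intro hcontra
      exact hk (Fin.ext (by have := k.isLt; have := k0.isLt; omega))
    · intro h; exact absurd (Finset.mem_univ k0) h
  -- roots of iterated derivatives
  have hroot : ∀ (j : Fin nA) (r : ℕ), r < m j →
      (Polynomial.derivative^[r] q).IsRoot (A j) := by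
    intro j r hr
    have hd : Polynomial.derivative^[r] q =
        ∑ k : Fin n, Polynomial.C (v k * (((n - 1 - (k : ℕ)).descFactorial r : ℕ) : ℂ)) *
          Polynomial.X ^ (n - 1 - (k : ℕ) - r) := by
      rw [hq, Polynomial.iterate_derivative_sum]
      refine Finset.sum_congr rfl fun k _ => ?_
      rw [Polynomial.iterate_derivative_C_mul, Polynomial.iterate_derivative_X_pow_eq_C_mul,
        ← mul_assoc, ← Polynomial.C_mul]
    have heval : (Polynomial.derivative^[r] q).eval (A j) =
        ∑ k : Fin n, v k * (((n - 1 - (k : ℕ)).descFactorial r : ℕ) : ℂ) *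
          A j ^ (n - 1 - (k : ℕ) - r) := by
      rw [hd, Polynomial.eval_finset_sum]
      simp
    have hmul : A j ^ r * ((Polynomial.derivative^[r] q).eval (A j)) =
        ∑ k : Fin n, v k * (((n - 1 - (k : ℕ)).descFactorial r : ℕ) : ℂ) *
          A j ^ (n - 1 - (k : ℕ)) := by
      rw [heval, Finset.mul_sum]
      refine Finset.sum_congr rfl fun k _ => ?_
      rcases le_or_gt r (n - 1 - (k : ℕ)) with h | h
      · have hsum : r + (n - 1 - (k : ℕ) - r) = n - 1 - (k : ℕ) := by omega
        calc A j ^ r * (v k * (((n - 1 - (k : ℕ)).descFactorial r : ℕ) : ℂ) *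
              A j ^ (n - 1 - (k : ℕ) - r))
            = v k * (((n - 1 - (k : ℕ)).descFactorial r : ℕ) : ℂ) *
              (A j ^ r * A j ^ (n - 1 - (k : ℕ) - r)) := by ring
          _ = _ := by rw [← pow_add, hsum]
      · rw [Nat.descFactorial_eq_zero_iff_lt.mpr h]
        simp
    have h0 : A j ^ r * ((Polynomial.derivative^[r] q).eval (A j)) = 0 := by
      rw [hmul]; exact hS j r hr
    have := mul_eq_zero.mp h0
    rcases this with h | h
    · exact absurd h (pow_ne_zero _ (hA0 j))
    · exact h
  -- q = 0 by degree
  have hq0 : q = 0 := by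
    by_contra hqne
    have hdvd : ∀ j, (Polynomial.X - Polynomial.C (A j)) ^ (m j) ∣ q := by
      intro j
      rcases Nat.eq_zero_or_pos (m j) with h0 | h1
      · rw [h0, pow_zero]; exact one_dvd _
      · have hlt : m j - 1 < q.rootMultiplicity (A j) := by
          rw [Polynomial.lt_rootMultiplicity_iff_isRoot_iterate_derivative hqne]
          intro r hrle
          exact hroot j r (by omega)
        exact dvd_trans (pow_dvd_pow _ (by omega)) (q.pow_rootMultiplicity_dvd (A j))
    have hprod : (∏ j, (Polynomial.X - Polynomial.C (A j)) ^ (m j)) ∣ q :=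
      Fintype.prod_dvd_of_coprime (fun i j hij => ((Polynomial.pairwise_coprime_X_sub_C hA) hij).pow) hdvd
    have hnd : (∏ j, (Polynomial.X - Polynomial.C (A j)) ^ (m j)).natDegree = n := by
      rw [Polynomial.natDegree_prod _ _ fun j _ => pow_ne_zero _ (Polynomial.X_sub_C_ne_zero _)]
      simp [Polynomial.natDegree_pow, Polynomial.natDegree_X_sub_C, hn]
    have hdeg : q.natDegree < n := by
      have h1 : q.natDegree ≤ n - 1 :=
        Polynomial.natDegree_sum_le_of_forall_le _ _ fun k _ =>
          (Polynomial.natDegree_C_mul_X_pow_le _ _).trans (by omega)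
      omega
    have := Polynomial.natDegree_le_of_dvd hprod hqne
    omega
  funext k
  have := hcoeff k
  rw [hq0, Polynomial.coeff_zero] at this
  exact this.symm

/-- Let `A₁,…,A_{n_A}` be distinct nonzero complex numbers with multiplicities
`m₁,…,m_{n_A} ≥ 1`, `n = Σⱼ mⱼ`, and `l ∈ ℤ`. The generalized Vandermonde matrix `V_{A,m,l}`,
with rows indexed by pairs `(j,r)` (`0 ≤ r < mⱼ`), columns indexed by `k = 0,…,n-1`, and
entries `(l-k)^r · Aⱼ^(l-k)`, is invertible (it has a two-sided inverse). -/
theorem generalized_vandermonde_invertible (nA : ℕ) (A : Fin nA → ℂ)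
    (hA : Function.Injective A) (hA0 : ∀ j, A j ≠ 0)
    (m : Fin nA → ℕ) (hm : ∀ j, 1 ≤ m j)
    (n : ℕ) (hn : n = ∑ j, m j) (l : ℤ)
    (V : Matrix (Σ j : Fin nA, Fin (m j)) (Fin n) ℂ)
    (hV : ∀ (p : Σ j : Fin nA, Fin (m j)) (k : Fin n),
      V p k = ((l - (k : ℕ) : ℤ) : ℂ) ^ (p.2 : ℕ) * A p.1 ^ (l - (k : ℕ) : ℤ)) :
    ∃ W : Matrix (Fin n) (Σ j : Fin nA, Fin (m j)) ℂ, V * W = 1 ∧ W * V = 1 := by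
  classical
  have hcard : Fintype.card (Σ j : Fin nA, Fin (m j)) = n := by
    rw [Fintype.card_sigma]
    simp [hn]
  let e : (Σ j : Fin nA, Fin (m j)) ≃ Fin n := Fintype.equivFinOfCardEq hcard
  let M : Matrix (Fin n) (Fin n) ℂ := V.submatrix e.symm id
  have hV' : V = M.submatrix e id := by
    ext p k
    simp [M, Matrix.submatrix_apply]
  have hdet : M.det ≠ 0 := by
    intro h0
    obtain ⟨v, hv0, hv⟩ := Matrix.exists_mulVec_eq_zero_iff.mpr h0
    apply hv0
    refine gv_key n v nA A hA hA0 m hn l ?_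
    intro j r hr
    have h1 : ∑ k : Fin n, V ⟨j, ⟨r, hr⟩⟩ k * v k = 0 := by
      have h2 := congrFun hv (e ⟨j, ⟨r, hr⟩⟩)
      simpa [M, Matrix.mulVec, dotProduct] using h2
    rw [← h1]
    exact Finset.sum_congr rfl fun k _ => by rw [hV]; ring
  have hU : IsUnit M.det := isUnit_iff_ne_zero.mpr hdet
  refine ⟨(M⁻¹).submatrix id e, ?_, ?_⟩
  · rw [hV', ← Equiv.coe_refl, Matrix.submatrix_mul_equiv, Matrix.mul_nonsing_inv _ hU]
    exact Matrix.submatrix_one_equiv e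
  · rw [hV', Matrix.submatrix_mul_equiv, Matrix.nonsing_inv_mul _ hU, Matrix.submatrix_id_id]
end
end

section
/- Let A_1,…,A_{n_A} be distinct nonzero complex numbers with multiplicities m_1,…,m_{n_A} ≥ 1, n = Σ_j m_j, and l ∈ ℤ. Then the conjugated matrix C = V_{A,m,l}^{−1} · D_{A,m} · V_{A,m,l} (an n×n matrix with rows and columns indexed by k, k' ∈ {0,…,n−1}) is of cyclic form: for every k ∈ {0,…,n−1} and every k' with 1 ≤ k' ≤ n−1, one has C_{k,k'} = 1 if k' = k+1 and C_{k,k'} = 0 otherwise (the entries of the 0-th column being unconstrained). -/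
open Complex Filter Set Finset
open scoped Real

noncomputable section

/-- With `A₁,…,A_{n_A}` distinct nonzero complex numbers, multiplicities
`mⱼ ≥ 1`, `n = Σⱼ mⱼ`, `l ∈ ℤ`, the generalized Vandermonde matrix `V = V_{A,m,l}` (entries
`(l-k)^r Aⱼ^(l-k)`), the block-diagonal matrix `D = D_{A,m}` (entries `C(r,r')·Aⱼ` at
`((j,r),(j,r'))` for `r' ≤ r`, else `0`), and `W` a two-sided inverse of `V`, the conjugated
matrix `C = V⁻¹ D V = W * D * V` is of cyclic form: for all `k` and all `k' ≥ 1`,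
`C k k' = 1` if `k' = k + 1` and `C k k' = 0` otherwise (the `0`-th column is unconstrained). -/
theorem conjugated_vandermonde_cyclic (nA : ℕ) (A : Fin nA → ℂ)
    (hA : Function.Injective A) (hA0 : ∀ j, A j ≠ 0)
    (m : Fin nA → ℕ) (hm : ∀ j, 1 ≤ m j)
    (n : ℕ) (hn : n = ∑ j, m j) (l : ℤ)
    (V : Matrix (Σ j : Fin nA, Fin (m j)) (Fin n) ℂ)
    (hV : ∀ (p : Σ j : Fin nA, Fin (m j)) (k : Fin n),
      V p k = ((l - (k : ℕ) : ℤ) : ℂ) ^ (p.2 : ℕ) * A p.1 ^ (l - (k : ℕ) : ℤ))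
    (D : Matrix (Σ j : Fin nA, Fin (m j)) (Σ j : Fin nA, Fin (m j)) ℂ)
    (hD : ∀ p q : Σ j : Fin nA, Fin (m j),
      D p q = if p.1 = q.1 ∧ (q.2 : ℕ) ≤ (p.2 : ℕ)
        then (Nat.choose (p.2 : ℕ) (q.2 : ℕ) : ℂ) * A p.1 else 0)
    (W : Matrix (Fin n) (Σ j : Fin nA, Fin (m j)) ℂ)
    (hW₁ : V * W = 1) (hW₂ : W * V = 1) :
    ∀ k k' : Fin n, 1 ≤ (k' : ℕ) →
      (W * D * V) k k' = if (k' : ℕ) = (k : ℕ) + 1 then 1 else 0 := by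
  intro k k' hk'
  have hk1 : (k' : ℕ) - 1 < n := by omega
  set k'' : Fin n := ⟨(k' : ℕ) - 1, hk1⟩ with hk''def
  -- the key shift identity
  have key : ∀ p, (D * V) p k' = V p k'' := by
    rintro ⟨j, r⟩
    rw [Matrix.mul_apply, ← Finset.univ_sigma_univ, Finset.sum_sigma]
    rw [Finset.sum_eq_single j]
    · -- inner sum over r'
      set x : ℂ := ((l - (k' : ℕ) : ℤ) : ℂ) with hx
      have hcast : (l - ((k'' : ℕ) : ℤ)) = (l - (k' : ℕ)) + 1 := by
        simp only [hk''def]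
        push_cast [Nat.cast_sub hk']
        ring
      have step1 : ∑ r' : Fin (m j), D ⟨j, r⟩ ⟨j, r'⟩ * V ⟨j, r'⟩ k'
          = ∑ i ∈ Finset.range (m j),
              (if i ≤ (r : ℕ) then
                (Nat.choose (r : ℕ) i : ℂ) * A j * (x ^ i * A j ^ (l - (k' : ℕ))) else 0) := by
        rw [← Fin.sum_univ_eq_sum_range]
        refine Finset.sum_congr rfl fun r' _ => ?_
        rw [hD, hV]
        simp only [true_and, ite_mul, zero_mul, ← hx]
      have step2 : ∑ i ∈ Finset.range (m j),
              (if i ≤ (r : ℕ) then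
                (Nat.choose (r : ℕ) i : ℂ) * A j * (x ^ i * A j ^ (l - (k' : ℕ))) else 0)
          = ∑ i ∈ Finset.range ((r : ℕ) + 1),
              (Nat.choose (r : ℕ) i : ℂ) * A j * (x ^ i * A j ^ (l - (k' : ℕ))) := by
        rw [← Finset.sum_subset (Finset.range_subset_range.mpr r.isLt)]
        · exact Finset.sum_congr rfl fun i hi =>
            if_pos (by simpa [Nat.lt_succ_iff] using Finset.mem_range.mp hi)
        · intro i _ hi
          exact if_neg (by simpa [Nat.lt_succ_iff] using hi)
      have hb : ((l - ((k' : ℕ) : ℤ) + 1 : ℤ) : ℂ) = x + 1 := by rw [hx]; push_cast; ring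
      rw [step1, step2, hV, hcast, zpow_add_one₀ (hA0 j), hb, add_pow, Finset.sum_mul]
      refine Finset.sum_congr rfl fun i _ => ?_
      simp only [one_pow, ← hx]
      ring
    · intro j' _ hj'
      apply Finset.sum_eq_zero
      intro r' _
      rw [hD]
      simp only [Ne.symm hj', false_and, if_false, zero_mul]
    · intro h; exact absurd (Finset.mem_univ j) h
  calc (W * D * V) k k' = (W * (D * V)) k k' := by rw [Matrix.mul_assoc]
    _ = ∑ p, W k p * V p k'' := by
        rw [Matrix.mul_apply]
        exact Finset.sum_congr rfl fun p _ => by rw [key]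
    _ = (W * V) k k'' := (Matrix.mul_apply).symm
    _ = (1 : Matrix (Fin n) (Fin n) ℂ) k k'' := by rw [hW₂]
    _ = if (k' : ℕ) = (k : ℕ) + 1 then 1 else 0 := by
        rw [Matrix.one_apply]
        have : (k = k'') ↔ ((k' : ℕ) = (k : ℕ) + 1) := by
          rw [Fin.ext_iff]; simp only [hk''def]; omega
        simp [this]
end
end

section
/- Let α, β ∈ ℂ with Re(β − α) > 0. Then for every s ∈ ℂ, ∫_{−1/2}^{1/2} e^{−2πisφ} · e^{2πiαφ} · (1 + e^{2πiφ})^{β−α} dφ = Γ(β − α + 1) · 𝚪_{α,β}(s), i.e. the Fourier transform of h_{α,β} equals the balanced gamma product 𝚪_{α,β}(s) = 1/(Γ(s − α + 1) · Γ(−s + β + 1)). -/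
open Complex Filter Set Finset
open scoped Real

open MeasureTheory Metric
open scoped Topology

noncomputable section

/-- Generalized binomial coefficient. -/
def bc (z : ℂ) (n : ℕ) : ℂ := (∏ k ∈ Finset.range n, (z - k)) / (n.factorial : ℂ)

lemma abs_bc_le (z : ℂ) {q : ℝ} (hq : ‖z‖ ≤ q) (n : ℕ) :
    ‖bc z n‖ ≤ (∏ k ∈ Finset.range n, (q + k)) / (n.factorial : ℝ) := by
  have hfac : (0:ℝ) < (n.factorial : ℝ) := by positivity
  rw [bc, norm_div]
  have h1 : ‖((n.factorial : ℕ) : ℂ)‖ = (n.factorial : ℝ) := by simp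
  rw [h1, div_le_div_iff_of_pos_right hfac]
  calc ‖∏ k ∈ Finset.range n, (z - (k:ℂ))‖ = ∏ k ∈ Finset.range n, ‖z - (k:ℂ)‖ := by
        simp [norm_prod]
    _ ≤ ∏ k ∈ Finset.range n, (q + k) := by
        refine Finset.prod_le_prod (fun i _ => norm_nonneg _) (fun i _ => ?_)
        calc ‖z - (i:ℂ)‖ ≤ ‖z‖ + ‖(i:ℂ)‖ := norm_sub_le _ _
          _ ≤ q + i := by
              have hi : ‖(i:ℂ)‖ = (i:ℝ) := by simp
              rw [hi]; exact add_le_add_left hq _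

lemma summable_bc (z : ℂ) {r : ℝ} (hr0 : 0 < r) (hr1 : r < 1) :
    Summable (fun n => ‖bc z n‖ * r ^ n) := by
  set q : ℝ := (⌈‖z‖⌉₊ : ℝ) + 1 with hqdef
  have hq : ‖z‖ ≤ q := le_trans (Nat.le_ceil _) (by simp [hqdef])
  have hq1 : (1:ℝ) ≤ q := by
    have : (0:ℝ) ≤ (⌈‖z‖⌉₊ : ℝ) := by positivity
    linarith
  set d : ℕ → ℝ := fun n => (∏ k ∈ Finset.range n, (q + k)) / (n.factorial : ℝ) * r ^ n
    with hddef
  have hdpos : ∀ n, 0 < d n := by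
    intro n
    have h1 : (0:ℝ) < ∏ k ∈ Finset.range n, (q + k) :=
      Finset.prod_pos (fun i _ => by positivity)
    have h2 : (0:ℝ) < (n.factorial : ℝ) := by positivity
    have h3 : (0:ℝ) < r ^ n := by positivity
    rw [hddef]
    positivity
  have hrec : ∀ n, d (n + 1) = d n * ((q + n) / (n + 1) * r) := by
    intro n
    rw [hddef]
    simp only [Finset.prod_range_succ, Nat.factorial_succ, pow_succ]
    have h2 : (0:ℝ) < (n.factorial : ℝ) := by positivity
    have h3 : (0:ℝ) < ((n:ℝ) + 1) := by positivity
    push_cast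
    field_simp
  have htend : Tendsto (fun n : ℕ => (q + n) / (n + 1) * r) atTop (𝓝 r) := by
    have h1 : Tendsto (fun n : ℕ => (q - 1) / ((n : ℝ) + 1) + 1) atTop (𝓝 (0 + 1)) := by
      refine Tendsto.add_const 1 ?_
      have := (tendsto_const_div_atTop_nhds_zero_nat (q - 1)).comp (tendsto_add_atTop_nat 1)
      refine this.congr (fun n => ?_)
      simp [Function.comp]
    have h2 : (fun n : ℕ => (q + n) / (n + 1)) = fun n : ℕ => (q - 1) / ((n : ℝ) + 1) + 1 := by
      funext n
      have h3 : ((n:ℝ) + 1) ≠ 0 := by positivity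
      field_simp
      ring
    rw [show (𝓝 r : Filter ℝ) = 𝓝 ((0 + 1) * r) by norm_num]
    exact Tendsto.mul_const r (h2 ▸ h1)
  have hsumd : Summable d := by
    refine summable_of_ratio_test_tendsto_lt_one hr1
      (Filter.Eventually.of_forall (fun n => (hdpos n).ne')) ?_
    have heq : ∀ n : ℕ, ‖d (n+1)‖ / ‖d n‖ = (q + n) / (n + 1) * r := by
      intro n
      rw [Real.norm_of_nonneg (hdpos (n+1)).le, Real.norm_of_nonneg (hdpos n).le, hrec n]
      rw [mul_comm, mul_div_assoc, div_self (hdpos n).ne', mul_one]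
    exact (funext heq : _) ▸ htend
  refine Summable.of_nonneg_of_le (fun n => by positivity) (fun n => ?_) hsumd
  exact mul_le_mul_of_nonneg_right (abs_bc_le z hq n) (by positivity)

lemma iteratedDeriv_one_add_cpow (z : ℂ) (n : ℕ) :
    ∀ w : ℂ, 0 < (1 + w).re →
      iteratedDeriv n (fun t : ℂ => (1 + t) ^ z) w
        = (∏ k ∈ Finset.range n, (z - k)) * (1 + w) ^ (z - n) := by
  induction n with
  | zero => intro w _; simp
  | succ n ih =>
    intro w hw
    have hS : IsOpen {t : ℂ | 0 < (1 + t).re} := by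
      have : Continuous fun t : ℂ => (1 + t).re := (Complex.continuous_re).comp
        (continuous_const.add continuous_id)
      exact isOpen_lt continuous_const this
    rw [iteratedDeriv_succ]
    have hev : iteratedDeriv n (fun t : ℂ => (1 + t) ^ z)
        =ᶠ[𝓝 w] fun t => (∏ k ∈ Finset.range n, (z - k)) * (1 + t) ^ (z - n) :=
      Filter.eventually_of_mem (hS.mem_nhds hw) (fun t ht => ih t ht)
    rw [hev.deriv_eq]
    have h1 : HasDerivAt (fun t : ℂ => 1 + t) 1 w := (hasDerivAt_id w).const_add 1
    have h2 : HasDerivAt (fun t : ℂ => (1 + t) ^ (z - n))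
        ((z - n) * (1 + w) ^ (z - n - 1) * 1) w :=
      h1.cpow_const (Complex.mem_slitPlane_iff.mpr (Or.inl hw))
    rw [(h2.const_mul (∏ k ∈ Finset.range n, (z - k))).deriv]
    rw [Finset.prod_range_succ]
    have : z - (n:ℂ) - 1 = z - ((n:ℕ)+1 : ℕ) := by push_cast; ring
    rw [this]
    ring

lemma hasSum_binomial (z w : ℂ) (hw : ‖w‖ < 1) :
    HasSum (fun n : ℕ => bc z n * w ^ n) ((1 + w) ^ z) := by
  have hdiff : DifferentiableOn ℂ (fun t : ℂ => (1 + t) ^ z) (Metric.ball 0 1) := by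
    intro t ht
    have hre : 0 < (1 + t).re := by
      rw [Metric.mem_ball, dist_zero_right] at ht
      have h1 : |t.re| ≤ ‖t‖ := Complex.abs_re_le_norm t
      have : (1 + t).re = 1 + t.re := by simp
      rw [this]
      have := neg_abs_le t.re
      linarith
    exact (((hasDerivAt_id t).const_add 1).cpow_const
      (Complex.mem_slitPlane_iff.mpr (Or.inl hre))).differentiableAt.differentiableWithinAt
  have hmem : w ∈ Metric.ball (0:ℂ) 1 := by
    rw [Metric.mem_ball, dist_zero_right]; exact hw
  have H := Complex.hasSum_taylorSeries_on_ball hdiff hmem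
  have key : ∀ n : ℕ, ((n.factorial : ℂ))⁻¹ • (w - 0) ^ n •
      iteratedDeriv n (fun t : ℂ => (1 + t) ^ z) 0 = bc z n * w ^ n := by
    intro n
    rw [iteratedDeriv_one_add_cpow z n 0 (by norm_num)]
    rw [sub_zero, smul_eq_mul, smul_eq_mul, bc]
    rw [show ((1:ℂ) + 0) = 1 by ring, Complex.one_cpow]
    ring
  have : (fun n : ℕ => ((n.factorial : ℂ))⁻¹ • (w - 0) ^ n •
      iteratedDeriv n (fun t : ℂ => (1 + t) ^ z) 0) = fun n => bc z n * w ^ n :=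
    funext key
  rw [this] at H
  exact H

/-- Uniform bound for `w ^ z` when `‖w‖ ≤ 2` and `0 < z.re`. -/
lemma abs_cpow_le_const {z : ℂ} (hz : 0 < z.re) {w : ℂ} (hw : ‖w‖ ≤ 2) :
    ‖w ^ z‖ ≤ 2 ^ z.re * Real.exp (π * |z.im|) := by
  refine (Complex.norm_cpow_le w z).trans ?_
  rw [div_eq_mul_inv, ← Real.exp_neg]
  have h1 : ‖w‖ ^ z.re ≤ 2 ^ z.re := by
    refine Real.rpow_le_rpow (norm_nonneg w) ?_ hz.le
    exact hw
  have h2 : Real.exp (-(w.arg * z.im)) ≤ Real.exp (π * |z.im|) := by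
    refine Real.exp_le_exp.mpr ?_
    calc -(w.arg * z.im) ≤ |w.arg * z.im| := neg_le_abs _
      _ = |w.arg| * |z.im| := abs_mul _ _
      _ ≤ π * |z.im| := by
          refine mul_le_mul_of_nonneg_right (Complex.abs_arg_le_pi w) (abs_nonneg _)
  exact mul_le_mul h1 h2 (Real.exp_pos _).le (by positivity)

lemma re_two_pi_I_mul (a : ℂ) (φ : ℝ) : (2 * (π:ℂ) * I * a * (φ:ℂ)).re = -(2 * π * φ * a.im) := by
  simp [Complex.mul_re, Complex.mul_im]
  ring

/-- Bound for the exponential factor. -/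
lemma abs_cexp_le {a : ℂ} {M : ℝ} (hM : |a.im| ≤ M) {φ : ℝ} (hφ : |φ| ≤ 1/2) :
    ‖Complex.exp (2 * (π:ℂ) * I * a * (φ:ℂ))‖ ≤ Real.exp (π * M) := by
  rw [Complex.norm_exp, re_two_pi_I_mul]
  refine Real.exp_le_exp.mpr ?_
  calc -(2 * π * φ * a.im) ≤ |2 * π * φ * a.im| := neg_le_abs _
    _ = 2 * π * |φ| * |a.im| := by
        rw [abs_mul, abs_mul, abs_mul]
        rw [_root_.abs_of_nonneg (by norm_num : (0:ℝ) ≤ 2), _root_.abs_of_nonneg Real.pi_pos.le]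
    _ ≤ 2 * π * (1/2) * M := by
        refine mul_le_mul (mul_le_mul_of_nonneg_left hφ (by positivity)) hM (abs_nonneg _) ?_
        positivity
    _ = π * M := by ring

lemma abs_one_add_exp_le (r : ℝ) (hr0 : 0 ≤ r) (hr1 : r ≤ 1) (φ : ℝ) :
    ‖1 + (r:ℂ) * Complex.exp (2 * (π:ℂ) * I * (φ:ℂ))‖ ≤ 2 := by
  have h1 : ‖Complex.exp (2 * (π:ℂ) * I * (φ:ℂ))‖ = 1 := by
    rw [Complex.norm_exp]
    have : (2 * (π:ℂ) * I * (φ:ℂ)).re = 0 := by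
      simp [Complex.mul_re, Complex.mul_im]
    rw [this, Real.exp_zero]
  calc ‖1 + (r:ℂ) * Complex.exp (2 * (π:ℂ) * I * (φ:ℂ))‖
      ≤ ‖(1:ℂ)‖ + ‖(r:ℂ) * Complex.exp (2 * (π:ℂ) * I * (φ:ℂ))‖ := norm_add_le _ _
    _ ≤ 1 + 1 := by
        rw [norm_one, norm_mul, h1, mul_one]
        have : ‖(r:ℂ)‖ = |r| := Complex.norm_real r
        rw [this, _root_.abs_of_nonneg hr0]
        linarith
    _ = 2 := by norm_num

lemma re_one_add_exp_pos {φ : ℝ} (h1 : -(1:ℝ)/2 < φ) (h2 : φ < 1/2) :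
    0 < (1 + Complex.exp (2 * (π:ℂ) * I * (φ:ℂ))).re := by
  have harg : (2 * (π:ℂ) * I * (φ:ℂ)) = ((2 * π * φ : ℝ) : ℂ) * I := by
    push_cast; ring
  rw [harg]
  rw [Complex.add_re, Complex.one_re, Complex.exp_ofReal_mul_I_re]
  have hcos : 1 + Real.cos (2 * π * φ) = 2 * Real.cos (π * φ) ^ 2 := by
    rw [Real.cos_sq]; ring_nf
  have hpos : 0 < Real.cos (π * φ) := by
    refine Real.cos_pos_of_mem_Ioo ⟨?_, ?_⟩
    · nlinarith [Real.pi_pos]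
    · nlinarith [Real.pi_pos]
  nlinarith [hpos, hcos, sq_nonneg (Real.cos (π * φ))]

/-- The integral of `exp (c φ)` over `(-1/2, 1/2)`. -/
lemma integral_cexp_Ioo (c : ℂ) (hc : c ≠ 0) :
    ∫ φ in Ioo (-(1:ℝ)/2) (1/2), Complex.exp (c * (φ:ℂ))
      = (Complex.exp (c/2) - Complex.exp (-(c/2))) / c := by
  rw [← MeasureTheory.integral_Ioc_eq_integral_Ioo,
    ← intervalIntegral.integral_of_le (by norm_num : -(1:ℝ)/2 ≤ 1/2)]
  have hderiv : ∀ φ : ℝ, HasDerivAt (fun ψ : ℝ => Complex.exp (c * (ψ:ℂ)) / c)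
      (Complex.exp (c * (φ:ℂ))) φ := by
    intro φ
    have h1 : HasDerivAt (fun t : ℂ => Complex.exp (c * t) / c)
        (Complex.exp (c * (φ:ℂ))) (φ:ℂ) := by
      have h2 : HasDerivAt (fun t : ℂ => c * t) c (φ:ℂ) := by
        simpa using (hasDerivAt_id ((φ:ℝ):ℂ)).const_mul c
      have h3 := (h2.cexp).div_const c
      have : Complex.exp (c * (φ:ℂ)) * c / c = Complex.exp (c * (φ:ℂ)) := by
        field_simp
      rwa [this] at h3
    exact h1.comp_ofReal
  rw [intervalIntegral.integral_eq_sub_of_hasDerivAt (fun φ _ => hderiv φ) ?_]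
  · push_cast
    have : c * (2⁻¹ : ℂ) = c / 2 := by ring
    rw [show c * ((1:ℂ)/2) = c/2 by ring]
    rw [show c * (-(1:ℂ)/2) = -(c/2) by ring]
    ring
  · refine (Continuous.intervalIntegrable ?_ _ _)
    exact Complex.continuous_exp.comp (continuous_const.mul Complex.continuous_ofReal)

lemma sin_shift (a : ℂ) (n : ℕ) :
    Complex.sin ((π:ℂ) * (a + n)) = (-1)^n * Complex.sin ((π:ℂ) * a) := by
  induction n with
  | zero => simp
  | succ n ih =>
    have : (π:ℂ) * (a + (n+1:ℕ)) = (π:ℂ) * (a + n) + π := by push_cast; ring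
    rw [this, Complex.sin_add_pi, ih]
    push_cast
    ring

lemma integral_term_I (a : ℂ) (n : ℕ) (ha : a + n ≠ 0) :
    ∫ φ in Ioo (-(1:ℝ)/2) (1/2), Complex.exp (2 * (π:ℂ) * I * (a + n) * (φ:ℂ))
      = (-1)^n * Complex.sin ((π:ℂ) * a) / ((π:ℂ) * (a + n)) := by
  have hπ : ((π:ℝ):ℂ) ≠ 0 := Complex.ofReal_ne_zero.mpr Real.pi_ne_zero
  have hc : (2 * (π:ℂ) * I * (a + n)) ≠ 0 := by
    refine mul_ne_zero (mul_ne_zero (mul_ne_zero two_ne_zero hπ) Complex.I_ne_zero) ha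
  have h := integral_cexp_Ioo (2 * (π:ℂ) * I * (a + n)) hc
  rw [h]
  have hnum : Complex.exp (2 * (π:ℂ) * I * (a + n) / 2)
      - Complex.exp (-(2 * (π:ℂ) * I * (a + n) / 2))
      = 2 * I * Complex.sin ((π:ℂ) * (a + n)) := by
    have e1 : 2 * (π:ℂ) * I * (a + n) / 2 = (π:ℂ) * (a + n) * I := by ring
    rw [e1, Complex.sin]
    rw [show -((π:ℂ) * (a + n) * I) = -((π:ℂ) * (a + n)) * I by ring]
    linear_combination (Complex.exp ((π:ℂ) * (a + n) * I)
      - Complex.exp (-((π:ℂ) * (a + n)) * I)) * Complex.I_sq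
  rw [hnum, sin_shift]
  field_simp

lemma an_ne_zero {a : ℂ} (ha : 0 < a.re) (n : ℕ) : a + (n:ℂ) ≠ 0 := by
  intro hcon
  have h1 : (a + (n:ℂ)).re = a.re + n := by simp
  rw [hcon] at h1
  simp at h1
  have : (0:ℝ) ≤ (n:ℝ) := Nat.cast_nonneg n
  linarith

lemma integral_term_B {a : ℂ} (ha : 0 < a.re) (n : ℕ) :
    ∫ x in Ioo (0:ℝ) 1, (x:ℂ) ^ (a + n - 1) = 1/(a + n) := by
  have hre : 0 < (a + n).re := by
    have h1 : (a + (n:ℂ)).re = a.re + n := by simp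
    rw [h1]
    have : (0:ℝ) ≤ (n:ℝ) := Nat.cast_nonneg n
    linarith
  have h := Complex.betaIntegral_eval_one_right hre
  rw [Complex.betaIntegral] at h
  simp only [sub_self, Complex.cpow_zero, mul_one] at h
  rw [intervalIntegral.integral_of_le zero_le_one,
    MeasureTheory.integral_Ioc_eq_integral_Ioo] at h
  exact h

/-- The key identity at radius `r < 1`. -/
lemma key_r (a z : ℂ) (ha : 0 < a.re) {r : ℝ} (hr0 : 0 < r) (hr1 : r < 1) :
    ∫ φ in Ioo (-(1:ℝ)/2) (1/2),
        Complex.exp (2 * (π:ℂ) * I * a * (φ:ℂ)) *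
          (1 + (r:ℂ) * Complex.exp (2 * (π:ℂ) * I * (φ:ℂ))) ^ z
      = Complex.sin ((π:ℂ) * a) / (π:ℂ) *
          ∫ x in Ioo (0:ℝ) 1, (x:ℂ) ^ (a - 1) * (1 - (r:ℂ) * (x:ℂ)) ^ z := by
  have hπ : ((π:ℝ):ℂ) ≠ 0 := Complex.ofReal_ne_zero.mpr Real.pi_ne_zero
  -- I side
  set F : ℕ → ℝ → ℂ := fun n φ =>
    bc z n * (r:ℂ)^n * Complex.exp (2 * (π:ℂ) * I * (a + n) * (φ:ℂ)) with hFdef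
  have hFcont : ∀ n, Continuous (F n) := by
    intro n
    exact continuous_const.mul (Complex.continuous_exp.comp
      (continuous_const.mul Complex.continuous_ofReal))
  have hFint : ∀ n, IntegrableOn (F n) (Ioo (-(1:ℝ)/2) (1/2)) := by
    intro n
    exact ((hFcont n).integrableOn_Ioc).mono_set Set.Ioo_subset_Ioc_self
  have hFnorm : ∀ n, ∀ φ ∈ Ioo (-(1:ℝ)/2) (1/2),
      ‖F n φ‖ ≤ ‖bc z n‖ * r^n * Real.exp (π * |a.im|) := by
    intro n φ hφ
    rw [hFdef]
    simp only [norm_mul, norm_pow]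
    have h1 : ‖((r:ℝ):ℂ)‖ = r := by
      rw [Complex.norm_real, Real.norm_eq_abs, _root_.abs_of_nonneg hr0.le]
    rw [h1]
    have h2 : |φ| ≤ 1/2 := by
      rw [abs_le]; obtain ⟨hl, hr⟩ := hφ; constructor <;> [linarith; linarith]
    have h3 : |(a + (n:ℂ)).im| ≤ |a.im| := by simp
    exact mul_le_mul_of_nonneg_left (abs_cexp_le h3 h2) (by positivity)
  have hFnormint : ∀ n, ∫ φ in Ioo (-(1:ℝ)/2) (1/2), ‖F n φ‖
      ≤ ‖bc z n‖ * r^n * Real.exp (π * |a.im|) := by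
    intro n
    have hconst : IntegrableOn (fun _ : ℝ => ‖bc z n‖ * r^n * Real.exp (π * |a.im|))
        (Ioo (-(1:ℝ)/2) (1/2)) := integrableOn_const measure_Ioo_lt_top.ne
    calc ∫ φ in Ioo (-(1:ℝ)/2) (1/2), ‖F n φ‖
        ≤ ∫ _ in Ioo (-(1:ℝ)/2) (1/2), ‖bc z n‖ * r^n * Real.exp (π * |a.im|) :=
          setIntegral_mono_on ((hFint n).norm) hconst measurableSet_Ioo (hFnorm n)
      _ = ‖bc z n‖ * r^n * Real.exp (π * |a.im|) := by
          rw [setIntegral_const]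
          rw [Real.volume_real_Ioo]
          norm_num
  have hFsummable : Summable (fun n => ∫ φ in Ioo (-(1:ℝ)/2) (1/2), ‖F n φ‖) := by
    refine Summable.of_nonneg_of_le
      (fun n => integral_nonneg (fun φ => norm_nonneg _)) hFnormint ?_
    exact (summable_bc z hr0 hr1).mul_right _
  have hIsum := MeasureTheory.hasSum_integral_of_summable_integral_norm
    (μ := volume.restrict (Ioo (-(1:ℝ)/2) (1/2))) hFint hFsummable
  have hpointI : ∀ φ : ℝ, HasSum (fun n => F n φ)
      (Complex.exp (2 * (π:ℂ) * I * a * (φ:ℂ)) *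
        (1 + (r:ℂ) * Complex.exp (2 * (π:ℂ) * I * (φ:ℂ))) ^ z) := by
    intro φ
    have hw : ‖(r:ℂ) * Complex.exp (2 * (π:ℂ) * I * (φ:ℂ))‖ < 1 := by
      rw [norm_mul]
      have h1 : ‖Complex.exp (2 * (π:ℂ) * I * (φ:ℂ))‖ = 1 := by
        rw [Complex.norm_exp]
        have : (2 * (π:ℂ) * I * (φ:ℂ)).re = 0 := by
          simp [Complex.mul_re, Complex.mul_im]
        rw [this, Real.exp_zero]
      rw [h1, mul_one, Complex.norm_real, Real.norm_eq_abs, _root_.abs_of_nonneg hr0.le]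
      exact hr1
    have hb := (hasSum_binomial z _ hw).mul_left
      (Complex.exp (2 * (π:ℂ) * I * a * (φ:ℂ)))
    have hterm : (fun n => Complex.exp (2 * (π:ℂ) * I * a * (φ:ℂ)) *
        (bc z n * ((r:ℂ) * Complex.exp (2 * (π:ℂ) * I * (φ:ℂ)))^n)) = fun n => F n φ := by
      funext n
      simp only [hFdef]
      rw [show 2 * (π:ℂ) * I * (a + n) * (φ:ℂ)
          = 2 * (π:ℂ) * I * a * (φ:ℂ) + n * (2 * (π:ℂ) * I * (φ:ℂ)) by push_cast; ring]
      rw [Complex.exp_add, Complex.exp_nat_mul, mul_pow]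
      ring
    rwa [hterm] at hb
  have hLHS : ∫ φ in Ioo (-(1:ℝ)/2) (1/2),
      Complex.exp (2 * (π:ℂ) * I * a * (φ:ℂ)) *
        (1 + (r:ℂ) * Complex.exp (2 * (π:ℂ) * I * (φ:ℂ))) ^ z
      = ∑' n, ∫ φ in Ioo (-(1:ℝ)/2) (1/2), F n φ := by
    rw [hIsum.tsum_eq]
    refine integral_congr_ae (Filter.Eventually.of_forall (fun φ => ?_))
    exact ((hpointI φ).tsum_eq).symm
  have hIval : ∀ n, ∫ φ in Ioo (-(1:ℝ)/2) (1/2), F n φ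
      = bc z n * (r:ℂ)^n * ((-1)^n * Complex.sin ((π:ℂ) * a) / ((π:ℂ) * (a + n))) := by
    intro n
    rw [hFdef]
    rw [MeasureTheory.integral_const_mul]
    rw [integral_term_I a n (an_ne_zero ha n)]
  -- B side
  set G : ℕ → ℝ → ℂ := fun n x => bc z n * (-(r:ℂ))^n * (x:ℂ) ^ (a + n - 1) with hGdef
  have hGint : ∀ n, IntegrableOn (G n) (Ioo (0:ℝ) 1) := by
    intro n
    have h1 : (-1:ℝ) < (a + n - 1).re := by
      have : (a + (n:ℂ) - 1).re = a.re + n - 1 := by simp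
      rw [this]
      have : (0:ℝ) ≤ (n:ℝ) := Nat.cast_nonneg n
      linarith
    have h2 : IntervalIntegrable (fun x : ℝ => (x:ℂ) ^ (a + n - 1)) volume 0 1 :=
      intervalIntegral.intervalIntegrable_cpow' h1
    rw [intervalIntegrable_iff_integrableOn_Ioc_of_le zero_le_one] at h2
    exact (h2.mono_set Set.Ioo_subset_Ioc_self).const_mul _
  have hGnorm : ∀ n, ∀ x ∈ Ioo (0:ℝ) 1,
      ‖G n x‖ ≤ ‖bc z n‖ * r^n * x ^ (a.re - 1) := by
    intro n x hx
    obtain ⟨hx0, hx1⟩ := hx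
    rw [hGdef]
    simp only [norm_mul, norm_pow, norm_neg]
    have h1 : ‖((r:ℝ):ℂ)‖ = r := by
      rw [Complex.norm_real, Real.norm_eq_abs, _root_.abs_of_nonneg hr0.le]
    rw [h1]
    have h2 : ‖(x:ℂ) ^ (a + n - 1)‖ = x ^ (a.re + n - 1) := by
      rw [Complex.norm_cpow_eq_rpow_re_of_pos hx0,
        show (a + (n:ℂ) - 1).re = a.re + n - 1 by simp]
    rw [h2]
    refine mul_le_mul_of_nonneg_left ?_ (by positivity)
    refine Real.rpow_le_rpow_of_exponent_ge hx0 hx1.le ?_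
    have : (0:ℝ) ≤ (n:ℝ) := Nat.cast_nonneg n
    linarith
  have hrpowint : IntegrableOn (fun x : ℝ => x ^ (a.re - 1)) (Ioo (0:ℝ) 1) := by
    have h2 : IntervalIntegrable (fun x : ℝ => x ^ (a.re - 1)) volume 0 1 :=
      intervalIntegral.intervalIntegrable_rpow' (by linarith)
    rw [intervalIntegrable_iff_integrableOn_Ioc_of_le zero_le_one] at h2
    exact h2.mono_set Set.Ioo_subset_Ioc_self
  have hGnormint : ∀ n, ∫ x in Ioo (0:ℝ) 1, ‖G n x‖
      ≤ ‖bc z n‖ * r^n * ∫ x in Ioo (0:ℝ) 1, x ^ (a.re - 1) := by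
    intro n
    calc ∫ x in Ioo (0:ℝ) 1, ‖G n x‖
        ≤ ∫ x in Ioo (0:ℝ) 1, ‖bc z n‖ * r^n * x ^ (a.re - 1) :=
          setIntegral_mono_on ((hGint n).norm)
            ((hrpowint.const_mul _)) measurableSet_Ioo (hGnorm n)
      _ = ‖bc z n‖ * r^n * ∫ x in Ioo (0:ℝ) 1, x ^ (a.re - 1) := by
          rw [MeasureTheory.integral_const_mul]
  have hGsummable : Summable (fun n => ∫ x in Ioo (0:ℝ) 1, ‖G n x‖) := by
    refine Summable.of_nonneg_of_le
      (fun n => integral_nonneg (fun x => norm_nonneg _)) hGnormint ?_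
    exact (summable_bc z hr0 hr1).mul_right _
  have hBsum := MeasureTheory.hasSum_integral_of_summable_integral_norm
    (μ := volume.restrict (Ioo (0:ℝ) 1)) hGint hGsummable
  have hpointB : ∀ x ∈ Ioo (0:ℝ) 1, HasSum (fun n => G n x)
      ((x:ℂ) ^ (a - 1) * (1 - (r:ℂ) * (x:ℂ)) ^ z) := by
    intro x hx
    obtain ⟨hx0, hx1⟩ := hx
    have hw : ‖-((r:ℂ) * (x:ℂ))‖ < 1 := by
      rw [norm_neg, norm_mul, Complex.norm_real, Complex.norm_real,
        Real.norm_eq_abs, Real.norm_eq_abs, _root_.abs_of_nonneg hr0.le,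
        _root_.abs_of_nonneg hx0.le]
      nlinarith
    have hb := (hasSum_binomial z _ hw).mul_left ((x:ℂ) ^ (a - 1))
    have hx0' : (x:ℂ) ≠ 0 := Complex.ofReal_ne_zero.mpr hx0.ne'
    have hterm : (fun n => (x:ℂ) ^ (a - 1) * (bc z n * (-((r:ℂ) * (x:ℂ)))^n))
        = fun n => G n x := by
      funext n
      simp only [hGdef]
      rw [show a + n - 1 = (a - 1) + n by ring, Complex.cpow_add _ _ hx0',
        Complex.cpow_natCast]
      rw [show -((r:ℂ) * (x:ℂ)) = (-(r:ℂ)) * (x:ℂ) by ring, mul_pow]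
      ring
    rw [hterm] at hb
    rw [show (1:ℂ) + -((r:ℂ) * (x:ℂ)) = 1 - (r:ℂ) * (x:ℂ) by ring] at hb
    exact hb
  have hRHS : ∫ x in Ioo (0:ℝ) 1, (x:ℂ) ^ (a - 1) * (1 - (r:ℂ) * (x:ℂ)) ^ z
      = ∑' n, ∫ x in Ioo (0:ℝ) 1, G n x := by
    rw [hBsum.tsum_eq]
    refine setIntegral_congr_fun measurableSet_Ioo (fun x hx => ?_)
    exact ((hpointB x hx).tsum_eq).symm
  have hBval : ∀ n, ∫ x in Ioo (0:ℝ) 1, G n x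
      = bc z n * (-(r:ℂ))^n * (1/(a + n)) := by
    intro n
    rw [hGdef]
    rw [MeasureTheory.integral_const_mul, integral_term_B ha n]
  rw [hLHS, hRHS]
  rw [← tsum_mul_left]
  refine tsum_congr (fun n => ?_)
  rw [hIval n, hBval n]
  have hne := an_ne_zero ha n
  rw [show (-(r:ℂ))^n = (-1)^n * (r:ℂ)^n by rw [neg_pow]]
  field_simp

/-- the approximating sequence of radii -/
def u (k : ℕ) : ℝ := 1 - ((k:ℝ) + 2)⁻¹

lemma u_pos (k : ℕ) : 0 < u k := by
  have h1 : ((k:ℝ) + 2)⁻¹ ≤ 2⁻¹ := by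
    refine inv_anti₀ (by norm_num) (by have := Nat.cast_nonneg (α := ℝ) k; linarith)
  simp only [u]
  norm_num at h1 ⊢
  linarith
lemma u_lt_one (k : ℕ) : u k < 1 := by
  have : (0:ℝ) < ((k:ℝ) + 2)⁻¹ := by positivity
  simp only [u]; linarith
lemma u_tendsto : Tendsto u atTop (𝓝 1) := by
  have h : Tendsto (fun k : ℕ => ((k:ℝ) + 2)⁻¹) atTop (𝓝 0) := by
    have := tendsto_one_div_add_atTop_nhds_zero_nat (𝕜 := ℝ)
    have h2 := this.comp (tendsto_add_atTop_nat 1)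
    refine h2.congr (fun k => ?_)
    simp [Function.comp, one_div]
    push_cast
    ring_nf
  have := (tendsto_const_nhds (x := (1:ℝ)) (f := atTop)).sub h
  show Tendsto (fun k : ℕ => 1 - ((k:ℝ) + 2)⁻¹) atTop (𝓝 1)
  simpa using this

lemma continuousOn_g (c z : ℂ) :
    ContinuousOn (fun φ : ℝ => Complex.exp (2 * (π:ℂ) * I * c * (φ:ℂ)) *
      (1 + Complex.exp (2 * (π:ℂ) * I * (φ:ℂ))) ^ z) (Ioo (-(1:ℝ)/2) (1/2)) := by
  intro φ hφ
  refine ContinuousAt.continuousWithinAt ?_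
  refine ContinuousAt.mul ?_ ?_
  · exact (Complex.continuous_exp.comp (continuous_const.mul
      Complex.continuous_ofReal)).continuousAt
  · have hbase : ContinuousAt (fun φ : ℝ => 1 + Complex.exp (2 * (π:ℂ) * I * (φ:ℂ))) φ :=
      (continuous_const.add (Complex.continuous_exp.comp
        (continuous_const.mul Complex.continuous_ofReal))).continuousAt
    exact ContinuousAt.cpow hbase continuousAt_const
      (Complex.mem_slitPlane_iff.mpr (Or.inl (re_one_add_exp_pos hφ.1 hφ.2)))

/-- Main identity on the half-plane. -/
lemma main_half (a z : ℂ) (hz : 0 < z.re) (ha : 0 < a.re) (him : a.im ≠ 0) :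
    ∫ φ in Ioo (-(1:ℝ)/2) (1/2),
        Complex.exp (2 * (π:ℂ) * I * a * (φ:ℂ)) *
          (1 + Complex.exp (2 * (π:ℂ) * I * (φ:ℂ))) ^ z
      = Complex.Gamma (z + 1) *
          ((Complex.Gamma (1 - a))⁻¹ * (Complex.Gamma (a + z + 1))⁻¹) := by
  have hπ : ((π:ℝ):ℂ) ≠ 0 := Complex.ofReal_ne_zero.mpr Real.pi_ne_zero
  set Cz : ℝ := 2 ^ z.re * Real.exp (π * |z.im|) with hCz
  -- convergence of the I-side
  have hItend : Tendsto (fun k => ∫ φ in Ioo (-(1:ℝ)/2) (1/2),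
      Complex.exp (2 * (π:ℂ) * I * a * (φ:ℂ)) *
        (1 + (u k : ℂ) * Complex.exp (2 * (π:ℂ) * I * (φ:ℂ))) ^ z) atTop
      (𝓝 (∫ φ in Ioo (-(1:ℝ)/2) (1/2),
        Complex.exp (2 * (π:ℂ) * I * a * (φ:ℂ)) *
          (1 + Complex.exp (2 * (π:ℂ) * I * (φ:ℂ))) ^ z)) := by
    refine MeasureTheory.tendsto_integral_of_dominated_convergence
      (fun _ => Real.exp (π * |a.im|) * Cz) ?_ ?_ ?_ ?_
    · intro k
      refine Continuous.aestronglyMeasurable ?_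
      refine Continuous.mul ?_ ?_
      · exact Complex.continuous_exp.comp (continuous_const.mul Complex.continuous_ofReal)
      · refine Continuous.cpow ?_ continuous_const ?_
        · exact continuous_const.add (continuous_const.mul
            (Complex.continuous_exp.comp (continuous_const.mul Complex.continuous_ofReal)))
        · intro φ
          refine Complex.mem_slitPlane_iff.mpr (Or.inl ?_)
          have h1 : ((1:ℂ) + (u k : ℂ) * Complex.exp (2 * (π:ℂ) * I * (φ:ℂ))).re
              = 1 + (u k) * (Complex.exp (2 * (π:ℂ) * I * (φ:ℂ))).re := by
            simp [Complex.add_re, Complex.mul_re, Complex.ofReal_re, Complex.ofReal_im]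
          rw [h1]
          have h2 : |(Complex.exp (2 * (π:ℂ) * I * (φ:ℂ))).re| ≤ 1 := by
            refine (Complex.abs_re_le_norm _).trans ?_
            rw [Complex.norm_exp]
            have : (2 * (π:ℂ) * I * (φ:ℂ)).re = 0 := by
              simp [Complex.mul_re, Complex.mul_im]
            rw [this, Real.exp_zero]
          have h3 := u_pos k
          have h4 := u_lt_one k
          have h5 := abs_le.mp h2
          nlinarith
    · exact MeasureTheory.integrable_const _
    · intro k
      refine (MeasureTheory.ae_restrict_mem measurableSet_Ioo).mono (fun φ hφ => ?_)
      rw [norm_mul]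
      have h2 : |φ| ≤ 1/2 := by
        rw [abs_le]; obtain ⟨hl, hr⟩ := hφ; constructor <;> [linarith; linarith]
      refine mul_le_mul (abs_cexp_le (le_refl _) h2)
        (abs_cpow_le_const hz (abs_one_add_exp_le _ (u_pos k).le (u_lt_one k).le φ))
        (norm_nonneg _) (Real.exp_pos _).le
    · refine (MeasureTheory.ae_restrict_mem measurableSet_Ioo).mono (fun φ hφ => ?_)
      refine Tendsto.const_mul _ ?_
      have hbase : Tendsto (fun k => (1:ℂ) + (u k : ℂ) *
          Complex.exp (2 * (π:ℂ) * I * (φ:ℂ))) atTop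
          (𝓝 (1 + Complex.exp (2 * (π:ℂ) * I * (φ:ℂ)))) := by
        have h1 : Tendsto (fun k => ((u k : ℝ) : ℂ)) atTop (𝓝 (1:ℂ)) := by
          have := Complex.continuous_ofReal.continuousAt.tendsto.comp u_tendsto
          simpa [Function.comp_def] using this
        have h2 := (h1.mul_const (Complex.exp (2 * (π:ℂ) * I * (φ:ℂ)))).const_add (1:ℂ)
        simpa using h2
      have hc : ContinuousAt (fun w : ℂ => w ^ z)
          (1 + Complex.exp (2 * (π:ℂ) * I * (φ:ℂ))) :=
        continuousAt_cpow_const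
          (Complex.mem_slitPlane_iff.mpr (Or.inl (re_one_add_exp_pos hφ.1 hφ.2)))
      exact hc.tendsto.comp hbase
  -- B side setup
  have hrpowint : IntegrableOn (fun x : ℝ => x ^ (a.re - 1)) (Ioo (0:ℝ) 1) := by
    have h2 : IntervalIntegrable (fun x : ℝ => x ^ (a.re - 1)) volume 0 1 :=
      intervalIntegral.intervalIntegrable_rpow' (by linarith)
    rw [intervalIntegrable_iff_integrableOn_Ioc_of_le zero_le_one] at h2
    exact h2.mono_set Set.Ioo_subset_Ioc_self
  have hBtend : Tendsto (fun k => ∫ x in Ioo (0:ℝ) 1,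
      (x:ℂ) ^ (a - 1) * (1 - ((u k : ℝ):ℂ) * (x:ℂ)) ^ z) atTop
      (𝓝 (∫ x in Ioo (0:ℝ) 1, (x:ℂ) ^ (a - 1) * (1 - (x:ℂ)) ^ z)) := by
    refine MeasureTheory.tendsto_integral_of_dominated_convergence
      (fun x => x ^ (a.re - 1) * Cz) ?_ ?_ ?_ ?_
    · intro k
      refine ContinuousOn.aestronglyMeasurable ?_ measurableSet_Ioo
      intro x hx
      refine ContinuousWithinAt.mul ?_ ?_
      · exact (Complex.continuousAt_ofReal_cpow_const x (a-1)
          (Or.inr hx.1.ne')).continuousWithinAt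
      · refine ContinuousAt.continuousWithinAt ?_
        refine ContinuousAt.cpow ?_ continuousAt_const ?_
        · exact (continuous_const.sub (continuous_const.mul
            Complex.continuous_ofReal)).continuousAt
        · refine Complex.mem_slitPlane_iff.mpr (Or.inl ?_)
          have h1 : ((1:ℂ) - ((u k : ℝ):ℂ) * (x:ℂ)).re = 1 - u k * x := by
            simp [Complex.sub_re, Complex.mul_re]
          rw [h1]
          have h3 := u_pos k
          have h4 := u_lt_one k
          obtain ⟨hx0, hx1⟩ := hx
          nlinarith
    · exact hrpowint.mul_const Cz
    · intro k
      refine (MeasureTheory.ae_restrict_mem measurableSet_Ioo).mono (fun x hx => ?_)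
      obtain ⟨hx0, hx1⟩ := hx
      rw [norm_mul]
      have h1 : ‖(x:ℂ) ^ (a - 1)‖ = x ^ (a.re - 1) := by
        rw [Complex.norm_cpow_eq_rpow_re_of_pos hx0,
          show (a - 1).re = a.re - 1 by simp]
      rw [h1]
      refine mul_le_mul_of_nonneg_left ?_ (by positivity)
      refine abs_cpow_le_const hz ?_
      have h2 : ((1:ℂ) - ((u k : ℝ):ℂ) * (x:ℂ)) = (((1 - u k * x : ℝ)):ℂ) := by
        push_cast; ring
      rw [h2, Complex.norm_real, Real.norm_eq_abs]
      have h3 := u_pos k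
      have h4 := u_lt_one k
      rw [abs_le]
      constructor <;> nlinarith
    · refine (MeasureTheory.ae_restrict_mem measurableSet_Ioo).mono (fun x hx => ?_)
      obtain ⟨hx0, hx1⟩ := hx
      refine Tendsto.const_mul _ ?_
      have hbase : Tendsto (fun k => (1:ℂ) - ((u k : ℝ):ℂ) * (x:ℂ)) atTop
          (𝓝 (1 - (x:ℂ))) := by
        have h1 : Tendsto (fun k => ((u k : ℝ) : ℂ)) atTop (𝓝 (1:ℂ)) := by
          have := Complex.continuous_ofReal.continuousAt.tendsto.comp u_tendsto
          simpa [Function.comp_def] using this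
        have h2 := (h1.mul_const ((x:ℝ):ℂ)).const_sub (1:ℂ)
        simpa using h2
      have hc : ContinuousAt (fun w : ℂ => w ^ z) (1 - (x:ℂ)) := by
        refine continuousAt_cpow_const ?_
        refine Complex.mem_slitPlane_iff.mpr (Or.inl ?_)
        have : ((1:ℂ) - (x:ℂ)).re = 1 - x := by simp
        rw [this]; linarith
      exact hc.tendsto.comp hbase
  -- combine
  have hkey : ∀ k, (∫ φ in Ioo (-(1:ℝ)/2) (1/2),
      Complex.exp (2 * (π:ℂ) * I * a * (φ:ℂ)) *
        (1 + ((u k : ℝ):ℂ) * Complex.exp (2 * (π:ℂ) * I * (φ:ℂ))) ^ z)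
      = Complex.sin ((π:ℂ) * a) / (π:ℂ) *
        ∫ x in Ioo (0:ℝ) 1, (x:ℂ) ^ (a - 1) * (1 - ((u k : ℝ):ℂ) * (x:ℂ)) ^ z :=
    fun k => key_r a z ha (u_pos k) (u_lt_one k)
  have hcomb : Tendsto (fun k => ∫ φ in Ioo (-(1:ℝ)/2) (1/2),
      Complex.exp (2 * (π:ℂ) * I * a * (φ:ℂ)) *
        (1 + ((u k : ℝ):ℂ) * Complex.exp (2 * (π:ℂ) * I * (φ:ℂ))) ^ z) atTop
      (𝓝 (Complex.sin ((π:ℂ) * a) / (π:ℂ) *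
        ∫ x in Ioo (0:ℝ) 1, (x:ℂ) ^ (a - 1) * (1 - (x:ℂ)) ^ z)) := by
    have := hBtend.const_mul (Complex.sin ((π:ℂ) * a) / (π:ℂ))
    refine this.congr (fun k => ?_)
    exact (hkey k).symm
  have hmain : (∫ φ in Ioo (-(1:ℝ)/2) (1/2),
      Complex.exp (2 * (π:ℂ) * I * a * (φ:ℂ)) *
        (1 + Complex.exp (2 * (π:ℂ) * I * (φ:ℂ))) ^ z)
      = Complex.sin ((π:ℂ) * a) / (π:ℂ) *
        ∫ x in Ioo (0:ℝ) 1, (x:ℂ) ^ (a - 1) * (1 - (x:ℂ)) ^ z :=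
    tendsto_nhds_unique hItend hcomb
  -- identify with the Beta integral
  have hBeq : (∫ x in Ioo (0:ℝ) 1, (x:ℂ) ^ (a - 1) * (1 - (x:ℂ)) ^ z)
      = Complex.betaIntegral a (z + 1) := by
    rw [Complex.betaIntegral]
    rw [intervalIntegral.integral_of_le zero_le_one,
      MeasureTheory.integral_Ioc_eq_integral_Ioo]
    simp only [add_sub_cancel_right]
  have hz1 : 0 < (z + 1).re := by
    have : (z + 1).re = z.re + 1 := by simp
    rw [this]; linarith
  have hbeta := Complex.Gamma_mul_Gamma_eq_betaIntegral ha hz1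
  rw [show a + (z + 1) = a + z + 1 by ring] at hbeta
  have hsin : Complex.sin ((π:ℂ) * a) ≠ 0 := by
    intro h0
    rw [Complex.sin_eq_zero_iff] at h0
    obtain ⟨k, hk⟩ := h0
    have him2 := congrArg Complex.im hk
    simp [Complex.mul_im, Complex.ofReal_im, Complex.ofReal_re,
      Complex.intCast_im, Complex.intCast_re] at him2
    exact him (by linarith)
  have hGa : Complex.Gamma a ≠ 0 := Complex.Gamma_ne_zero_of_re_pos ha
  have hG1 : Complex.Gamma (a + z + 1) ≠ 0 := by
    refine Complex.Gamma_ne_zero_of_re_pos ?_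
    have : (a + z + 1).re = a.re + z.re + 1 := by simp
    rw [this]; linarith
  have hG2 : Complex.Gamma (1 - a) ≠ 0 := by
    refine Complex.Gamma_ne_zero (fun m => ?_)
    intro hcon
    have := congrArg Complex.im hcon
    simp at this
    exact him this
  have hrefl := Complex.Gamma_mul_Gamma_one_sub a
  have hkey2 : Complex.sin ((π:ℂ) * a) * (Complex.Gamma a * Complex.Gamma (1 - a))
      = (π:ℂ) := by
    rw [hrefl]
    field_simp
  have hbeta' : Complex.betaIntegral a (z + 1)
      = Complex.Gamma a * Complex.Gamma (z + 1) / Complex.Gamma (a + z + 1) := by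
    rw [eq_div_iff hG1]
    linear_combination -hbeta
  rw [hmain, hBeq, hbeta']
  field_simp
  linear_combination Complex.Gamma (z + 1) * hkey2

lemma abs_one_add_exp_le' (φ : ℝ) :
    ‖1 + Complex.exp (2 * (π:ℂ) * I * (φ:ℂ))‖ ≤ 2 := by
  have := abs_one_add_exp_le 1 zero_le_one le_rfl φ
  simpa using this

/-- For `α, β ∈ ℂ` with `Re(β - α) > 0` and every `s ∈ ℂ`,
`∫_{-1/2}^{1/2} e^{-2πisφ} e^{2πiαφ} (1 + e^{2πiφ})^{β-α} dφ = Γ(β-α+1) · 𝚪_{α,β}(s)`,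
i.e. the Fourier transform of `h_{α,β}` equals the balanced gamma product
`𝚪_{α,β}(s) = 1/(Γ(s-α+1)·Γ(-s+β+1))`. The power is the principal branch. -/
theorem fourier_transform_h (α β : ℂ) (h : 0 < (β - α).re) (s : ℂ) :
    (∫ φ in (-(1 : ℝ) / 2)..((1 : ℝ) / 2),
        Complex.exp (-(2 * (π : ℂ) * Complex.I) * s * (φ : ℂ)) *
          (Complex.exp (2 * (π : ℂ) * Complex.I * α * (φ : ℂ)) *
            (1 + Complex.exp (2 * (π : ℂ) * Complex.I * (φ : ℂ))) ^ (β - α))) =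
      Complex.Gamma (β - α + 1) *
        ((Complex.Gamma (s - α + 1))⁻¹ * (Complex.Gamma (-s + β + 1))⁻¹) := by
  set z : ℂ := β - α with hzdef
  set Cz : ℝ := 2 ^ z.re * Real.exp (π * |z.im|) with hCzdef
  set F : ℂ → ℂ := fun t => ∫ φ in Ioo (-(1:ℝ)/2) (1/2),
    Complex.exp (2 * (π:ℂ) * I * (α - t) * (φ:ℂ)) *
      (1 + Complex.exp (2 * (π:ℂ) * I * (φ:ℂ))) ^ z with hFdef
  set G : ℂ → ℂ := fun t => Complex.Gamma (z + 1) *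
    ((Complex.Gamma (t - α + 1))⁻¹ * (Complex.Gamma (-t + β + 1))⁻¹) with hGdef
  -- step A : the LHS equals F s
  have hstepA : (∫ φ in (-(1 : ℝ) / 2)..((1 : ℝ) / 2),
      Complex.exp (-(2 * (π : ℂ) * Complex.I) * s * (φ : ℂ)) *
        (Complex.exp (2 * (π : ℂ) * Complex.I * α * (φ : ℂ)) *
          (1 + Complex.exp (2 * (π : ℂ) * Complex.I * (φ : ℂ))) ^ (β - α))) = F s := by
    rw [hFdef]
    rw [intervalIntegral.integral_of_le (by norm_num : (-(1:ℝ)/2) ≤ 1/2),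
      MeasureTheory.integral_Ioc_eq_integral_Ioo]
    refine setIntegral_congr_fun measurableSet_Ioo (fun φ _ => ?_)
    rw [← mul_assoc, ← Complex.exp_add]
    rw [show -(2 * (π : ℂ) * Complex.I) * s * (φ : ℂ)
        + 2 * (π : ℂ) * Complex.I * α * (φ : ℂ)
        = 2 * (π:ℂ) * I * (α - s) * (φ:ℂ) by ring]
  -- differentiability of F
  have hFd : Differentiable ℂ F := by
    intro s₀
    set M : ℝ := |(α - s₀).im| + 1 with hMdef
    have hmeas : ∀ t : ℂ, AEStronglyMeasurable
        (fun φ : ℝ => Complex.exp (2 * (π:ℂ) * I * (α - t) * (φ:ℂ)) *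
          (1 + Complex.exp (2 * (π:ℂ) * I * (φ:ℂ))) ^ z)
        (volume.restrict (Ioo (-(1:ℝ)/2) (1/2))) := fun t =>
      (continuousOn_g (α - t) z).aestronglyMeasurable measurableSet_Ioo
    have hderiv : ∀ (t : ℂ) (φ : ℝ), HasDerivAt
        (fun t' : ℂ => Complex.exp (2 * (π:ℂ) * I * (α - t') * (φ:ℂ)) *
          (1 + Complex.exp (2 * (π:ℂ) * I * (φ:ℂ))) ^ z)
        ((2 * (π:ℂ) * I * (-1) * (φ:ℂ)) *
          (Complex.exp (2 * (π:ℂ) * I * (α - t) * (φ:ℂ)) *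
            (1 + Complex.exp (2 * (π:ℂ) * I * (φ:ℂ))) ^ z)) t := by
      intro t φ
      have h1 : HasDerivAt (fun t' : ℂ => α - t') (-1) t := (hasDerivAt_id t).const_sub α
      have h2 := (h1.const_mul (2 * (π:ℂ) * I)).mul_const ((φ:ℝ):ℂ)
      have h3 := h2.cexp.mul_const
        ((1 + Complex.exp (2 * (π:ℂ) * I * (φ:ℂ))) ^ z)
      refine h3.congr_deriv ?_
      ring
    have hbddK : ∀ (t : ℂ) (φ : ℝ), |φ| ≤ 1/2 → |(α - t).im| ≤ M →
        ‖Complex.exp (2 * (π:ℂ) * I * (α - t) * (φ:ℂ)) *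
          (1 + Complex.exp (2 * (π:ℂ) * I * (φ:ℂ))) ^ z‖ ≤ Real.exp (π * M) * Cz := by
      intro t φ hφ hM
      rw [norm_mul]
      exact mul_le_mul (abs_cexp_le hM hφ)
        (abs_cpow_le_const h (abs_one_add_exp_le' φ)) (norm_nonneg _) (Real.exp_pos _).le
    have himle : ∀ t ∈ ball s₀ 1, |(α - t).im| ≤ M := by
      intro t ht
      rw [hMdef]
      have h1 : (α - t).im = (α - s₀).im + (s₀ - t).im := by
        simp [Complex.sub_im]
      rw [h1]
      have h2 : |(s₀ - t).im| ≤ ‖s₀ - t‖ := Complex.abs_im_le_norm _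
      have h3 : ‖s₀ - t‖ < 1 := by
        rw [mem_ball, dist_eq_norm] at ht
        rw [norm_sub_rev]
        exact ht
      calc |(α - s₀).im + (s₀ - t).im| ≤ |(α - s₀).im| + |(s₀ - t).im| := abs_add_le _ _
        _ ≤ |(α - s₀).im| + 1 := by linarith
    have key := hasDerivAt_integral_of_dominated_loc_of_deriv_le
      (μ := volume.restrict (Ioo (-(1:ℝ)/2) (1/2))) (x₀ := s₀) (s := ball s₀ 1) (ball_mem_nhds s₀ one_pos)
      (F := fun t φ => Complex.exp (2 * (π:ℂ) * I * (α - t) * (φ:ℂ)) *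
        (1 + Complex.exp (2 * (π:ℂ) * I * (φ:ℂ))) ^ z)
      (F' := fun t (φ:ℝ) => (2 * (π:ℂ) * I * (-1) * (φ:ℂ)) *
        (Complex.exp (2 * (π:ℂ) * I * (α - t) * (φ:ℂ)) *
          (1 + Complex.exp (2 * (π:ℂ) * I * (φ:ℂ))) ^ z))
      (bound := fun _ => π * (Real.exp (π * M) * Cz))
      (Filter.Eventually.of_forall (fun t => hmeas t)) ?_ ?_ ?_ ?_ ?_
    · exact key.2.differentiableAt
    · -- integrability of F s₀
      refine Integrable.mono' (integrable_const (Real.exp (π * M) * Cz)) (hmeas s₀) ?_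
      refine (MeasureTheory.ae_restrict_mem measurableSet_Ioo).mono (fun φ hφ => ?_)
      have h2 : |φ| ≤ 1/2 := by
        rw [abs_le]; obtain ⟨hl, hr⟩ := hφ; constructor <;> [linarith; linarith]
      exact hbddK s₀ φ h2 (himle s₀ (mem_ball_self one_pos))
    · -- measurability of F' s₀
      refine AEStronglyMeasurable.mul ?_ (hmeas s₀)
      exact (Continuous.aestronglyMeasurable (by continuity))
    · -- bound
      refine (MeasureTheory.ae_restrict_mem measurableSet_Ioo).mono (fun φ hφ => ?_)
      intro t ht
      have h2 : |φ| ≤ 1/2 := by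
        rw [abs_le]; obtain ⟨hl, hr⟩ := hφ; constructor <;> [linarith; linarith]
      rw [norm_mul]
      have h4 : ‖2 * (π:ℂ) * I * (-1) * ((φ:ℝ):ℂ)‖ = 2 * π * |φ| := by
        simp [Complex.norm_real, Real.norm_eq_abs, Complex.norm_I,
          _root_.abs_of_pos Real.pi_pos]
      rw [h4]
      calc 2 * π * |φ| * ‖Complex.exp (2 * (π:ℂ) * I * (α - t) * (φ:ℂ)) *
            (1 + Complex.exp (2 * (π:ℂ) * I * (φ:ℂ))) ^ z‖
          ≤ 2 * π * (1/2) * (Real.exp (π * M) * Cz) := by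
            refine mul_le_mul (by nlinarith [Real.pi_pos]) (hbddK t φ h2 (himle t ht))
              (norm_nonneg _) (by positivity)
        _ = π * (Real.exp (π * M) * Cz) := by ring
    · exact integrable_const _
    · -- differentiability a.e.
      exact Filter.Eventually.of_forall (fun φ => fun t _ => hderiv t φ)
  -- differentiability of G
  have hGd : Differentiable ℂ G := by
    rw [hGdef]
    refine Differentiable.const_mul ?_ _
    refine Differentiable.mul ?_ ?_
    · exact Complex.differentiable_one_div_Gamma.comp
        ((differentiable_id.sub_const α).add_const 1)
    · exact Complex.differentiable_one_div_Gamma.comp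
        ((differentiable_id.neg.add_const β).add_const 1)
  -- identity theorem
  have hFG : F = G := by
    refine AnalyticOnNhd.eq_of_eventuallyEq
      (analyticOnNhd_univ_iff_differentiable.mpr hFd)
      (analyticOnNhd_univ_iff_differentiable.mpr hGd)
      (z₀ := α - (1 + I)) ?_
    have hVopen : IsOpen {t : ℂ | 0 < (α - t).re ∧ (α - t).im ≠ 0} := by
      refine IsOpen.inter ?_ ?_
      · exact isOpen_lt continuous_const
          ((Complex.continuous_re).comp (continuous_const.sub continuous_id))
      · exact IsOpen.preimage ((Complex.continuous_im).comp
          (continuous_const.sub continuous_id)) isOpen_compl_singleton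
    have hmem : α - (1 + I) ∈ {t : ℂ | 0 < (α - t).re ∧ (α - t).im ≠ 0} := by
      constructor <;> simp
    refine Filter.eventually_of_mem (hVopen.mem_nhds hmem) (fun t ht => ?_)
    have := main_half (α - t) z h ht.1 ht.2
    rw [hFdef, hGdef]
    simp only []
    rw [this]
    rw [show (1:ℂ) - (α - t) = t - α + 1 by ring,
      show α - t + z + 1 = -t + β + 1 by rw [hzdef]; ring]
  rw [hstepA, congrFun hFG s, hGdef]
end
end
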